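/- arXiv:2510.20461 — 2 statements merged into one kernel-verified Lean document; each statement's English description precedes it below -/
import Mathlib

section
/- There exists a constant c_q, depending only on q ∈ (0,1), such that for all integers ℓ, N ≥ 1 and every function f on Ω̂: Ent_{π̂}(f²) ≤ c_q·ℓ·Σ_{i=1}^N π̂( Var_{π̂_{Λ_i}}(f) ), where Var_{π̂_{Λ_i}}(f) denotes the conditional variance of f with respect to the coordinates in the block Λ_i (distributed according to π̂_{Λ_i}), the coordinates outside Λ_i being fixed. -/
open scoped Classical BigOperators

/-- The volume `Λ = {1, …, N(ℓ+1)}`, union of the `N` blocks `Λ_i`. -/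
noncomputable def Lam (ℓ N : ℕ) : Finset ℤ := Finset.Icc 1 ((N : ℤ) * ((ℓ : ℤ) + 1))

/-- Configurations on `Λ`. -/
abbrev S (ℓ N : ℕ) : Type := ↥(Lam ℓ N) → Bool

/-- The state of site `x` for the configuration `η`, with infected (`0`) boundary
conditions at `0` and at `N(ℓ+1)+1` (all other external sites are irrelevant). -/
noncomputable def getS (ℓ N : ℕ) (η : S ℓ N) (x : ℤ) : Bool :=
  if h : x ∈ Lam ℓ N then η ⟨x, h⟩
  else decide (x ≠ 0 ∧ x ≠ (N : ℤ) * ((ℓ : ℤ) + 1) + 1)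

/-- The block `Λ_i = {i(ℓ+1) - ℓ, …, i(ℓ+1)}` of `ℓ+1` consecutive sites. -/
noncomputable def blockI (ℓ : ℕ) (i : ℤ) : Finset ℤ :=
  Finset.Icc (i * ((ℓ : ℤ) + 1) - (ℓ : ℤ)) (i * ((ℓ : ℤ) + 1))

/-- `η ∈ Ω̂`: every block `Λ_i`, `1 ≤ i ≤ N`, contains at least one infected site. -/
def goodCfg (ℓ N : ℕ) (η : S ℓ N) : Prop :=
  ∀ i ∈ Finset.Icc (1 : ℤ) (N : ℤ), ∃ x ∈ blockI ℓ i, getS ℓ N η x = false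

/-- `Ω̂` as a finite set of configurations. -/
noncomputable def GoodSet (ℓ N : ℕ) : Finset (S ℓ N) :=
  Finset.univ.filter (goodCfg ℓ N)

/-- The Bernoulli(`p`) weight of a configuration, with `p = 1 - q`. -/
noncomputable def wS (q : ℝ) (ℓ N : ℕ) (η : S ℓ N) : ℝ :=
  ∏ y : ↥(Lam ℓ N), if η y then 1 - q else q

/-- The probability of `η` under `π̂ = ⊗_i π̂_{Λ_i}` (the Bernoulli(`p`) product measure
conditioned on every block containing an infection). -/
noncomputable def phat (q : ℝ) (ℓ N : ℕ) (η : S ℓ N) : ℝ :=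
  if goodCfg ℓ N η then wS q ℓ N η / (∑ ξ ∈ GoodSet ℓ N, wS q ℓ N ξ) else 0

/-- The mean of `g` under `π̂`. -/
noncomputable def avg (q : ℝ) (ℓ N : ℕ) (g : S ℓ N → ℝ) : ℝ :=
  ∑ η ∈ GoodSet ℓ N, phat q ℓ N η * g η

/-- The entropy `Ent_{π̂}(g) = π̂(g log g) - π̂(g) log π̂(g)`. -/
noncomputable def entS (q : ℝ) (ℓ N : ℕ) (g : S ℓ N → ℝ) : ℝ :=
  (∑ η ∈ GoodSet ℓ N, phat q ℓ N η * (g η * Real.log (g η))) -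
    avg q ℓ N g * Real.log (avg q ℓ N g)

/-- The configuration `η` flipped at site `x`. -/
def flipS (ℓ N : ℕ) (η : S ℓ N) (x : ℤ) : S ℓ N := fun y =>
  if (y : ℤ) = x then !(η y) else η y

/-- The configuration agreeing with `ζ` on the block `Λ_i` and with `η` elsewhere. -/
noncomputable def patch (ℓ N : ℕ) (i : ℤ) (η ζ : S ℓ N) : S ℓ N := fun y =>
  if (y : ℤ) ∈ blockI ℓ i then ζ y else η y

/-- The (unnormalized) weight of the block configuration `ζ|_{Λ_i}` under `π̂_{Λ_i}`,
the Bernoulli(`p`) measure on the block conditioned on containing an infection. -/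
noncomputable def blockW (q : ℝ) (ℓ N : ℕ) (i : ℤ) (ζ : S ℓ N) : ℝ :=
  (if ∃ x ∈ blockI ℓ i, getS ℓ N ζ x = false then (1 : ℝ) else 0) *
    ∏ y ∈ Finset.univ.filter (fun y : ↥(Lam ℓ N) => (y : ℤ) ∈ blockI ℓ i),
      (if ζ y then 1 - q else q)

/-- The conditional expectation `π̂_{Λ_i}(f)(η)`: average of `f` over the coordinates of
the block `Λ_i` (distributed according to `π̂_{Λ_i}`), the other coordinates fixed by `η`. -/
noncomputable def condE (q : ℝ) (ℓ N : ℕ) (i : ℤ) (f : S ℓ N → ℝ) (η : S ℓ N) : ℝ :=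
  (∑ ζ : S ℓ N, blockW q ℓ N i ζ * f (patch ℓ N i η ζ)) /
    (∑ ζ : S ℓ N, blockW q ℓ N i ζ)

/-- The conditional variance `Var_{π̂_{Λ_i}}(f)(η)` over the block `Λ_i`. -/
noncomputable def condVar (q : ℝ) (ℓ N : ℕ) (i : ℤ) (f : S ℓ N → ℝ) (η : S ℓ N) : ℝ :=
  condE q ℓ N i (fun ξ => f ξ ^ 2) η - (condE q ℓ N i f η) ^ 2

-- Part 1: blocks, arithmetic, basic positivity
section P1

variable {ℓ N : ℕ}

lemma blockI_subset_Lam {i : ℤ} (hi : i ∈ Finset.Icc (1:ℤ) (N:ℤ)) :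
    blockI ℓ i ⊆ Lam ℓ N := by
  rw [Finset.mem_Icc] at hi
  intro x hx
  rw [blockI, Finset.mem_Icc] at hx
  rw [Lam, Finset.mem_Icc]
  have hl : (0:ℤ) ≤ (ℓ:ℤ) := Int.ofNat_nonneg ℓ
  have h1 : (1:ℤ) * ((ℓ:ℤ)+1) ≤ i * ((ℓ:ℤ)+1) :=
    mul_le_mul_of_nonneg_right hi.1 (by linarith)
  have h2 : i * ((ℓ:ℤ)+1) ≤ (N:ℤ) * ((ℓ:ℤ)+1) :=
    mul_le_mul_of_nonneg_right hi.2 (by linarith)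
  constructor
  · linarith [hx.1]
  · linarith [hx.2]

lemma blockI_disjoint {i j : ℤ} (hij : i ≠ j) :
    Disjoint (blockI ℓ i) (blockI ℓ j) := by
  rw [Finset.disjoint_left]
  intro x hx hx'
  rw [blockI, Finset.mem_Icc] at hx hx'
  have hl : (0:ℤ) ≤ (ℓ:ℤ) := Int.ofNat_nonneg ℓ
  rcases lt_or_gt_of_ne hij with h | h
  · have h1 : i + 1 ≤ j := h
    have h2 : (i+1) * ((ℓ:ℤ)+1) ≤ j * ((ℓ:ℤ)+1) :=
      mul_le_mul_of_nonneg_right h1 (by linarith)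
    have := hx.2; have := hx'.1
    nlinarith
  · have h1 : j + 1 ≤ i := h
    have h2 : (j+1) * ((ℓ:ℤ)+1) ≤ i * ((ℓ:ℤ)+1) :=
      mul_le_mul_of_nonneg_right h1 (by linarith)
    have := hx.1; have := hx'.2
    nlinarith

lemma exists_block {x : ℤ} (hx : x ∈ Lam ℓ N) :
    ∃ i ∈ Finset.Icc (1:ℤ) (N:ℤ), x ∈ blockI ℓ i := by
  rw [Lam, Finset.mem_Icc] at hx
  have hl : (0:ℤ) ≤ (ℓ:ℤ) := Int.ofNat_nonneg ℓ
  induction N with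
  | zero =>
    exfalso
    simp only [Nat.cast_zero, zero_mul] at hx
    omega
  | succ n ih =>
    by_cases hc : x ≤ (n:ℤ) * ((ℓ:ℤ)+1)
    · obtain ⟨i, hi1, hi2⟩ := ih ⟨hx.1, hc⟩
      refine ⟨i, ?_, hi2⟩
      rw [Finset.mem_Icc] at hi1 ⊢
      constructor
      · exact hi1.1
      · push_cast
        linarith [hi1.2]
    · refine ⟨(n:ℤ)+1, ?_, ?_⟩
      · rw [Finset.mem_Icc]
        constructor
        · linarith [Int.ofNat_nonneg n]
        · push_cast; linarith
      · push_neg at hc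
        rw [blockI, Finset.mem_Icc]
        push_cast at hx ⊢
        constructor
        · nlinarith
        · linarith [hx.2]

lemma getS_mem (η : S ℓ N) {x : ℤ} (h : x ∈ Lam ℓ N) : getS ℓ N η x = η ⟨x, h⟩ := by
  rw [getS, dif_pos h]

/-- The block `i` of `η` contains an infected site. -/
def Iblk (ℓ N : ℕ) (i : ℤ) (η : S ℓ N) : Prop :=
  ∃ x ∈ blockI ℓ i, getS ℓ N η x = false

lemma goodCfg_def (η : S ℓ N) :
    goodCfg ℓ N η ↔ ∀ i ∈ Finset.Icc (1:ℤ) (N:ℤ), Iblk ℓ N i η := Iff.rfl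

lemma Iblk_congr {i : ℤ} (hi : i ∈ Finset.Icc (1:ℤ) (N:ℤ)) {η η' : S ℓ N}
    (h : ∀ y : ↥(Lam ℓ N), (y:ℤ) ∈ blockI ℓ i → η y = η' y) :
    Iblk ℓ N i η ↔ Iblk ℓ N i η' := by
  constructor <;> rintro ⟨x, hx, hxv⟩ <;> refine ⟨x, hx, ?_⟩ <;>
    have hxm : x ∈ Lam ℓ N := blockI_subset_Lam hi hx
  · rw [getS_mem η' hxm, ← h ⟨x, hxm⟩ hx, ← getS_mem η hxm]; exact hxv
  · rw [getS_mem η hxm, h ⟨x, hxm⟩ hx, ← getS_mem η' hxm]; exact hxv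

end P1
-- Part 2: patch and weight factorization
section P2

variable {q : ℝ} {ℓ N : ℕ}

lemma patch_apply (i : ℤ) (η ζ : S ℓ N) (y : ↥(Lam ℓ N)) :
    patch ℓ N i η ζ y = if (y:ℤ) ∈ blockI ℓ i then ζ y else η y := rfl

lemma patch_patch (i : ℤ) (η ζ ξ : S ℓ N) :
    patch ℓ N i (patch ℓ N i η ζ) ξ = patch ℓ N i η ξ := by
  funext y
  by_cases h : (y:ℤ) ∈ blockI ℓ i <;> simp [patch, h]

lemma patch_cancel (i : ℤ) (η ζ : S ℓ N) :
    patch ℓ N i (patch ℓ N i η ζ) (patch ℓ N i ζ η) = η := by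
  funext y
  by_cases h : (y:ℤ) ∈ blockI ℓ i <;> simp [patch, h]

lemma patch_comm {i j : ℤ} (hij : i ≠ j) (η ζ ξ : S ℓ N) :
    patch ℓ N j (patch ℓ N i η ξ) ζ = patch ℓ N i (patch ℓ N j η ζ) ξ := by
  funext y
  by_cases hi : (y:ℤ) ∈ blockI ℓ i
  · have hj : ¬ (y:ℤ) ∈ blockI ℓ j :=
      fun hj => Finset.disjoint_left.1 (blockI_disjoint hij) hi hj
    simp [patch, hi, hj]
  · by_cases hj : (y:ℤ) ∈ blockI ℓ j <;> simp [patch, hi, hj]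

lemma patch_congr_block (i : ℤ) (η ζ ζ' : S ℓ N)
    (h : ∀ y : ↥(Lam ℓ N), (y:ℤ) ∈ blockI ℓ i → ζ y = ζ' y) :
    patch ℓ N i η ζ = patch ℓ N i η ζ' := by
  funext y
  by_cases hy : (y:ℤ) ∈ blockI ℓ i <;> simp [patch, hy]
  exact h y hy

/-- Product of weights over the block. -/
noncomputable def PB (q : ℝ) (ℓ N : ℕ) (i : ℤ) (η : S ℓ N) : ℝ :=
  ∏ y ∈ Finset.univ.filter (fun y : ↥(Lam ℓ N) => (y : ℤ) ∈ blockI ℓ i),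
    (if η y then 1 - q else q)

/-- Product of weights off the block. -/
noncomputable def PO (q : ℝ) (ℓ N : ℕ) (i : ℤ) (η : S ℓ N) : ℝ :=
  ∏ y ∈ Finset.univ.filter (fun y : ↥(Lam ℓ N) => ¬ (y : ℤ) ∈ blockI ℓ i),
    (if η y then 1 - q else q)

lemma wS_factor (i : ℤ) (η : S ℓ N) : wS q ℓ N η = PB q ℓ N i η * PO q ℓ N i η := by
  rw [wS, PB, PO, Finset.prod_filter_mul_prod_filter_not]

lemma blockW_eq (i : ℤ) (ζ : S ℓ N) :
    blockW q ℓ N i ζ = (if Iblk ℓ N i ζ then (1:ℝ) else 0) * PB q ℓ N i ζ := by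
  unfold blockW PB Iblk
  congr 1
  simp

lemma PB_patch (i : ℤ) (η ζ : S ℓ N) : PB q ℓ N i (patch ℓ N i η ζ) = PB q ℓ N i ζ := by
  rw [PB, PB]
  refine Finset.prod_congr rfl fun y hy => ?_
  rw [Finset.mem_filter] at hy
  rw [patch_apply, if_pos hy.2]

lemma PO_patch (i : ℤ) (η ζ : S ℓ N) : PO q ℓ N i (patch ℓ N i η ζ) = PO q ℓ N i η := by
  rw [PO, PO]
  refine Finset.prod_congr rfl fun y hy => ?_
  rw [Finset.mem_filter] at hy
  rw [patch_apply, if_neg hy.2]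

lemma PB_nonneg (hq0 : 0 < q) (hq1 : q < 1) (i : ℤ) (η : S ℓ N) : 0 ≤ PB q ℓ N i η :=
  Finset.prod_nonneg fun y _ => by split <;> linarith

lemma PB_pos (hq0 : 0 < q) (hq1 : q < 1) (i : ℤ) (η : S ℓ N) : 0 < PB q ℓ N i η :=
  Finset.prod_pos fun y _ => by split <;> linarith

lemma wS_pos (hq0 : 0 < q) (hq1 : q < 1) (η : S ℓ N) : 0 < wS q ℓ N η :=
  Finset.prod_pos fun y _ => by split <;> linarith

lemma blockW_nonneg (hq0 : 0 < q) (hq1 : q < 1) (i : ℤ) (ζ : S ℓ N) :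
    0 ≤ blockW q ℓ N i ζ := by
  rw [blockW_eq]
  apply mul_nonneg
  · split <;> norm_num
  · exact PB_nonneg hq0 hq1 i ζ

lemma Iblk_patch_self {i : ℤ} (hi : i ∈ Finset.Icc (1:ℤ) (N:ℤ)) (η ζ : S ℓ N) :
    Iblk ℓ N i (patch ℓ N i η ζ) ↔ Iblk ℓ N i ζ :=
  Iblk_congr hi fun y hy => by rw [patch_apply, if_pos hy]

lemma Iblk_patch_other {i j : ℤ} (hj : j ∈ Finset.Icc (1:ℤ) (N:ℤ)) (hij : i ≠ j)
    (η ζ : S ℓ N) : Iblk ℓ N j (patch ℓ N i η ζ) ↔ Iblk ℓ N j η :=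
  Iblk_congr hj fun y hy => by
    rw [patch_apply, if_neg (fun hi => Finset.disjoint_left.1 (blockI_disjoint hij) hi hy)]

/-- All blocks other than `i` are infected. -/
def RestInf (ℓ N : ℕ) (i : ℤ) (η : S ℓ N) : Prop :=
  ∀ j ∈ Finset.Icc (1:ℤ) (N:ℤ), j ≠ i → Iblk ℓ N j η

lemma goodCfg_split {i : ℤ} (hi : i ∈ Finset.Icc (1:ℤ) (N:ℤ)) (η : S ℓ N) :
    goodCfg ℓ N η ↔ RestInf ℓ N i η ∧ Iblk ℓ N i η := by
  rw [goodCfg_def]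
  constructor
  · intro h
    exact ⟨fun j hj _ => h j hj, h i hi⟩
  · rintro ⟨h1, h2⟩ j hj
    by_cases hji : j = i
    · rw [hji]; exact h2
    · exact h1 j hj hji

lemma goodCfg_patch {i : ℤ} (hi : i ∈ Finset.Icc (1:ℤ) (N:ℤ)) (η ζ : S ℓ N) :
    goodCfg ℓ N (patch ℓ N i η ζ) ↔ RestInf ℓ N i η ∧ Iblk ℓ N i ζ := by
  rw [goodCfg_split hi, Iblk_patch_self hi]
  constructor <;> rintro ⟨h1, h2⟩ <;> refine ⟨?_, h2⟩ <;> intro j hj hji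
  · rw [← Iblk_patch_other hj (fun h => hji h.symm) η ζ]
    exact h1 j hj hji
  · rw [Iblk_patch_other hj (fun h => hji h.symm) η ζ]
    exact h1 j hj hji

end P2
-- Part 3: positivity of partition functions, avg basics, condE basics
section P3

variable {q : ℝ} {ℓ N : ℕ}

lemma Iblk_false {i : ℤ} (hi : i ∈ Finset.Icc (1:ℤ) (N:ℤ)) (η : S ℓ N)
    (h : ∀ y : ↥(Lam ℓ N), (y:ℤ) ∈ blockI ℓ i → η y = false) : Iblk ℓ N i η := by
  have hx : i * ((ℓ:ℤ)+1) ∈ blockI ℓ i := by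
    rw [blockI, Finset.mem_Icc]
    constructor
    · linarith [Int.ofNat_nonneg ℓ]
    · exact le_rfl
  have hxm : i * ((ℓ:ℤ)+1) ∈ Lam ℓ N := blockI_subset_Lam hi hx
  exact ⟨i * ((ℓ:ℤ)+1), hx, by rw [getS_mem η hxm]; exact h _ hx⟩

lemma goodCfg_false : goodCfg ℓ N (fun _ => false) := by
  intro i hi
  exact Iblk_false hi _ (fun _ _ => rfl)

lemma GoodSet_nonempty : (GoodSet ℓ N).Nonempty :=
  ⟨fun _ => false, by rw [GoodSet, Finset.mem_filter]; exact ⟨Finset.mem_univ _, goodCfg_false⟩⟩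

lemma Zgood_pos (hq0 : 0 < q) (hq1 : q < 1) :
    0 < ∑ ξ ∈ GoodSet ℓ N, wS q ℓ N ξ :=
  Finset.sum_pos (fun ξ _ => wS_pos hq0 hq1 ξ) GoodSet_nonempty

lemma mem_GoodSet {η : S ℓ N} : η ∈ GoodSet ℓ N ↔ goodCfg ℓ N η := by
  rw [GoodSet, Finset.mem_filter]
  exact ⟨fun h => h.2, fun h => ⟨Finset.mem_univ _, h⟩⟩

lemma avg_eq (g : S ℓ N → ℝ) :
    avg q ℓ N g = (∑ η ∈ GoodSet ℓ N, wS q ℓ N η * g η) / (∑ ξ ∈ GoodSet ℓ N, wS q ℓ N ξ) := by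
  rw [avg, Finset.sum_div]
  refine Finset.sum_congr rfl fun η hη => ?_
  rw [phat, if_pos (mem_GoodSet.1 hη)]
  ring

lemma phat_nonneg (hq0 : 0 < q) (hq1 : q < 1) (η : S ℓ N) : 0 ≤ phat q ℓ N η := by
  rw [phat]
  split
  · exact div_nonneg (wS_pos hq0 hq1 η).le (Zgood_pos hq0 hq1).le
  · exact le_rfl

lemma avg_mono (hq0 : 0 < q) (hq1 : q < 1) {g g' : S ℓ N → ℝ} (h : ∀ η, g η ≤ g' η) :
    avg q ℓ N g ≤ avg q ℓ N g' :=
  Finset.sum_le_sum fun η _ => mul_le_mul_of_nonneg_left (h η) (phat_nonneg hq0 hq1 η)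

lemma avg_sub (g g' : S ℓ N → ℝ) :
    avg q ℓ N (fun η => g η - g' η) = avg q ℓ N g - avg q ℓ N g' := by
  rw [avg, avg, avg, ← Finset.sum_sub_distrib]
  exact Finset.sum_congr rfl fun η _ => by ring

lemma avg_smul (c : ℝ) (g : S ℓ N → ℝ) :
    avg q ℓ N (fun η => c * g η) = c * avg q ℓ N g := by
  rw [avg, avg, Finset.mul_sum]
  exact Finset.sum_congr rfl fun η _ => by ring

lemma avg_const (hq0 : 0 < q) (hq1 : q < 1) (c : ℝ) :
    avg q ℓ N (fun _ => c) = c := by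
  rw [avg_eq, ← Finset.sum_mul, mul_comm, mul_div_assoc,
    div_self (ne_of_gt (Zgood_pos hq0 hq1)), mul_one]

/-- Normalization of one-block weights. -/
noncomputable def Zb (q : ℝ) (ℓ N : ℕ) (i : ℤ) : ℝ := ∑ ζ : S ℓ N, blockW q ℓ N i ζ

lemma Zb_pos (hq0 : 0 < q) (hq1 : q < 1) {i : ℤ} (hi : i ∈ Finset.Icc (1:ℤ) (N:ℤ)) :
    0 < Zb q ℓ N i := by
  rw [Zb]
  apply Finset.sum_pos' (fun ζ _ => blockW_nonneg hq0 hq1 i ζ)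
  refine ⟨fun _ => false, Finset.mem_univ _, ?_⟩
  rw [blockW_eq, if_pos (Iblk_false hi _ (fun _ _ => rfl)), one_mul]
  exact PB_pos hq0 hq1 i _

lemma condE_eq (i : ℤ) (g : S ℓ N → ℝ) (η : S ℓ N) :
    condE q ℓ N i g η = ∑ ζ : S ℓ N, blockW q ℓ N i ζ / Zb q ℓ N i * g (patch ℓ N i η ζ) := by
  rw [condE, ← Zb, Finset.sum_div]
  exact Finset.sum_congr rfl fun ζ _ => by ring

/-- `h` does not depend on the coordinates in block `i`. -/
def IndepOf (ℓ N : ℕ) (i : ℤ) (h : S ℓ N → ℝ) : Prop :=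
  ∀ η ζ, h (patch ℓ N i η ζ) = h η

lemma condE_indep_self (i : ℤ) (g : S ℓ N → ℝ) : IndepOf ℓ N i (condE q ℓ N i g) := by
  intro η ζ
  rw [condE, condE]
  congr 1
  exact Finset.sum_congr rfl fun ξ _ => by rw [patch_patch]

lemma condE_indep_other {i j : ℤ} (hij : i ≠ j) {ψ : S ℓ N → ℝ} (h : IndepOf ℓ N j ψ) :
    IndepOf ℓ N j (condE q ℓ N i ψ) := by
  intro η ζ
  rw [condE, condE]
  congr 1
  refine Finset.sum_congr rfl fun ξ _ => ?_
  rw [← patch_comm hij η ζ ξ, h]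

end P3
-- Part 4: the Fubini / self-consistency identity for avg and condE
section P4

variable {q : ℝ} {ℓ N : ℕ}

lemma condE_nonneg (hq0 : 0 < q) (hq1 : q < 1) (i : ℤ) {g : S ℓ N → ℝ}
    (hg : ∀ η, 0 ≤ g η) (η : S ℓ N) : 0 ≤ condE q ℓ N i g η := by
  rw [condE]
  apply div_nonneg
  · exact Finset.sum_nonneg fun ζ _ => mul_nonneg (blockW_nonneg hq0 hq1 i ζ) (hg _)
  · exact Finset.sum_nonneg fun ζ _ => blockW_nonneg hq0 hq1 i ζ

lemma condE_mono (hq0 : 0 < q) (hq1 : q < 1) {i : ℤ} (hi : i ∈ Finset.Icc (1:ℤ) (N:ℤ))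
    {g g' : S ℓ N → ℝ} (h : ∀ η, g η ≤ g' η) (η : S ℓ N) :
    condE q ℓ N i g η ≤ condE q ℓ N i g' η := by
  rw [condE_eq, condE_eq]
  refine Finset.sum_le_sum fun ζ _ => ?_
  exact mul_le_mul_of_nonneg_left (h _)
    (div_nonneg (blockW_nonneg hq0 hq1 i ζ) (Zb_pos hq0 hq1 hi).le)

lemma condE_mul_indep (i : ℤ) (g ψ : S ℓ N → ℝ) (hψ : IndepOf ℓ N i ψ) (η : S ℓ N) :
    condE q ℓ N i (fun ξ => g ξ * ψ ξ) η = condE q ℓ N i g η * ψ η := by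
  rw [condE, condE, div_mul_eq_mul_div, Finset.sum_mul]
  congr 1
  refine Finset.sum_congr rfl fun ζ _ => ?_
  rw [hψ η ζ]
  ring

/-- The key involution identity: `π̂` is invariant under resampling block `i`. -/
lemma sum_good_mul {i : ℤ} (hi : i ∈ Finset.Icc (1:ℤ) (N:ℤ)) (g : S ℓ N → ℝ) :
    ∑ η ∈ GoodSet ℓ N, wS q ℓ N η * (∑ ζ : S ℓ N, blockW q ℓ N i ζ * g (patch ℓ N i η ζ))
      = Zb q ℓ N i * ∑ η ∈ GoodSet ℓ N, wS q ℓ N η * g η := by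
  have hL : ∑ η ∈ GoodSet ℓ N, wS q ℓ N η *
        (∑ ζ : S ℓ N, blockW q ℓ N i ζ * g (patch ℓ N i η ζ))
      = ∑ p : S ℓ N × S ℓ N, (if goodCfg ℓ N p.1 then wS q ℓ N p.1 else 0) *
          (blockW q ℓ N i p.2 * g (patch ℓ N i p.1 p.2)) := by
    rw [GoodSet, Finset.sum_filter, Fintype.sum_prod_type]
    refine Finset.sum_congr rfl fun η _ => ?_
    split
    · rw [Finset.mul_sum]
    · simp
  have hR : ∑ η ∈ GoodSet ℓ N, wS q ℓ N η * g η
      = ∑ η : S ℓ N, (if goodCfg ℓ N η then wS q ℓ N η else 0) * g η := by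
    rw [GoodSet, Finset.sum_filter]
    refine Finset.sum_congr rfl fun η _ => ?_
    split <;> simp
  rw [hL, hR]
  -- involution
  set σ : S ℓ N × S ℓ N → S ℓ N × S ℓ N :=
    fun p => (patch ℓ N i p.1 p.2, patch ℓ N i p.2 p.1) with hσ
  have hinv : Function.Involutive σ := by
    intro p
    rw [hσ]
    simp only
    rw [patch_cancel, patch_cancel]
  have hbij : Function.Bijective σ := hinv.bijective
  have hreindex := Fintype.sum_bijective σ hbij
    (fun p => (if goodCfg ℓ N p.1 then wS q ℓ N p.1 else 0) *
        (blockW q ℓ N i p.2 * g (patch ℓ N i p.1 p.2)))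
    (fun p => (if goodCfg ℓ N p.1 then wS q ℓ N p.1 else 0) *
        (blockW q ℓ N i p.2 * g p.1))
    ?_
  · rw [hreindex, Fintype.sum_prod_type, Finset.mul_sum]
    refine Finset.sum_congr rfl fun η _ => ?_
    rw [Zb, Finset.sum_mul]
    exact Finset.sum_congr rfl fun ζ _ => by ring
  · -- termwise weight identity
    rintro ⟨η, ζ⟩
    simp only [hσ]
    have e1 : wS q ℓ N (patch ℓ N i η ζ) = PB q ℓ N i ζ * PO q ℓ N i η := by
      rw [wS_factor i, PB_patch, PO_patch]
    have e2 : wS q ℓ N η = PB q ℓ N i η * PO q ℓ N i η := wS_factor i η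
    rw [e1, e2, blockW_eq i ζ, blockW_eq i (patch ℓ N i ζ η), PB_patch]
    by_cases hR : RestInf ℓ N i η <;> by_cases h1 : Iblk ℓ N i η <;>
      by_cases h2 : Iblk ℓ N i ζ <;>
      simp only [goodCfg_patch hi, goodCfg_split hi, Iblk_patch_self hi,
        hR, h1, h2, if_true, if_false, and_true, and_false, true_and, false_and,
        not_true, not_false_iff, ite_true, ite_false] <;> ring

end P4
-- Part 5: invariance of avg, iterated conditional expectations, tower property
section P5

variable {q : ℝ} {ℓ N : ℕ}

lemma avg_condE (hq0 : 0 < q) (hq1 : q < 1) {i : ℤ} (hi : i ∈ Finset.Icc (1:ℤ) (N:ℤ))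
    (g : S ℓ N → ℝ) : avg q ℓ N (condE q ℓ N i g) = avg q ℓ N g := by
  rw [avg_eq, avg_eq]
  congr 1
  have hZb := Zb_pos (ℓ := ℓ) hq0 hq1 hi
  have e : ∀ η, wS q ℓ N η * condE q ℓ N i g η
      = wS q ℓ N η * (∑ ζ : S ℓ N, blockW q ℓ N i ζ * g (patch ℓ N i η ζ)) / Zb q ℓ N i := by
    intro η
    rw [condE, ← Zb]
    ring
  rw [Finset.sum_congr rfl fun η _ => e η, ← Finset.sum_div, sum_good_mul hi g,
    mul_comm, mul_div_assoc, div_self (ne_of_gt hZb), mul_one]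

lemma avg_mul_condE (hq0 : 0 < q) (hq1 : q < 1) {i : ℤ}
    (hi : i ∈ Finset.Icc (1:ℤ) (N:ℤ)) (h ψ : S ℓ N → ℝ) (hψ : IndepOf ℓ N i ψ) :
    avg q ℓ N (fun η => h η * ψ η) = avg q ℓ N (fun η => condE q ℓ N i h η * ψ η) := by
  have e1 : avg q ℓ N (condE q ℓ N i (fun η => h η * ψ η)) =
      avg q ℓ N (fun η => h η * ψ η) := avg_condE hq0 hq1 hi _
  rw [← e1]
  congr 1
  funext η
  exact condE_mul_indep i h ψ hψ η

/-- Iterated conditional expectation over blocks `1, …, k`. -/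
noncomputable def EE (q : ℝ) (ℓ N : ℕ) : ℕ → (S ℓ N → ℝ) → S ℓ N → ℝ
  | 0 => fun g => g
  | k+1 => fun g => condE q ℓ N ((k:ℤ)+1) (EE q ℓ N k g)

lemma EE_zero (g : S ℓ N → ℝ) : EE q ℓ N 0 g = g := rfl

lemma EE_succ (k : ℕ) (g : S ℓ N → ℝ) :
    EE q ℓ N (k+1) g = condE q ℓ N ((k:ℤ)+1) (EE q ℓ N k g) := rfl

lemma block_mem {k : ℕ} (hk : k < N) : ((k:ℤ)+1) ∈ Finset.Icc (1:ℤ) (N:ℤ) := by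
  rw [Finset.mem_Icc]
  constructor
  · linarith [Int.ofNat_nonneg k]
  · exact_mod_cast hk

lemma EE_indep (g : S ℓ N → ℝ) :
    ∀ (k : ℕ) (m : ℕ), 1 ≤ m → m ≤ k → IndepOf ℓ N (m:ℤ) (EE q ℓ N k g) := by
  intro k
  induction k with
  | zero => intro m h1 h2; omega
  | succ n ih =>
    intro m h1 h2
    rw [EE_succ]
    by_cases hm : m = n + 1
    · rw [show (m:ℤ) = (n:ℤ)+1 by rw [hm]; push_cast; ring]
      exact condE_indep_self _ _
    · have hmn : m ≤ n := by omega
      refine condE_indep_other ?_ (ih m h1 hmn)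
      intro hc
      apply hm
      have : (m:ℤ) = (n:ℤ)+1 := hc.symm
      omega

lemma EE_nonneg (hq0 : 0 < q) (hq1 : q < 1) (k : ℕ) {g : S ℓ N → ℝ}
    (hg : ∀ η, 0 ≤ g η) : ∀ η, 0 ≤ EE q ℓ N k g η := by
  induction k with
  | zero => exact hg
  | succ n ih =>
    rw [EE_succ]
    exact condE_nonneg hq0 hq1 _ ih

lemma EE_mono (hq0 : 0 < q) (hq1 : q < 1) {k : ℕ} (hk : k ≤ N) {g g' : S ℓ N → ℝ}
    (h : ∀ η, g η ≤ g' η) : ∀ η, EE q ℓ N k g η ≤ EE q ℓ N k g' η := by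
  induction k with
  | zero => exact h
  | succ n ih =>
    intro η
    rw [EE_succ, EE_succ]
    exact condE_mono hq0 hq1 (block_mem (by omega)) (ih (by omega)) η

lemma avg_EE (hq0 : 0 < q) (hq1 : q < 1) {k : ℕ} (hk : k ≤ N) (g : S ℓ N → ℝ) :
    avg q ℓ N (EE q ℓ N k g) = avg q ℓ N g := by
  induction k with
  | zero => rfl
  | succ n ih =>
    rw [EE_succ]
    have h1 : avg q ℓ N (condE q ℓ N ((n:ℤ)+1) (EE q ℓ N n g)) =
        avg q ℓ N (EE q ℓ N n g) := avg_condE hq0 hq1 (block_mem (by omega)) _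
    exact h1.trans (ih (by omega))

lemma tower (hq0 : 0 < q) (hq1 : q < 1) {k : ℕ} (hk : k ≤ N) (g ψ : S ℓ N → ℝ)
    (hψ : ∀ m : ℕ, 1 ≤ m → m ≤ k → IndepOf ℓ N (m:ℤ) ψ) :
    avg q ℓ N (fun η => g η * ψ η) = avg q ℓ N (fun η => EE q ℓ N k g η * ψ η) := by
  induction k with
  | zero => rfl
  | succ n ih =>
    have h1 := ih (by omega) (fun m hm1 hm2 => hψ m hm1 (by omega))
    rw [h1]
    simp only [EE_succ]
    have h2 : IndepOf ℓ N ((n:ℤ)+1) ψ := by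
      have := hψ (n+1) (by omega) le_rfl
      rwa [show (((n+1):ℕ):ℤ) = (n:ℤ)+1 by push_cast; ring] at this
    exact avg_mul_condE hq0 hq1 (block_mem (by omega)) _ ψ h2

end P5


/-- Core scalar inequality for the one-block log-Sobolev bound. -/
lemma core_ineq (u v T : ℝ) (hu : 0 ≤ u) (hv : 0 < v) (hT : 1 ≤ T) (hbd : u ≤ T * v) :
    u * Real.log u - u * Real.log v - u + v ≤
      (9 + 4 * Real.log T) * (Real.sqrt u - Real.sqrt v) ^ 2 := by
  have hlogT : 0 ≤ Real.log T := Real.log_nonneg hT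
  have hsq : 0 ≤ (Real.sqrt u - Real.sqrt v) ^ 2 := sq_nonneg _
  rcases eq_or_lt_of_le hu with h0 | hu0
  · -- u = 0
    rw [← h0]
    have hvv : Real.sqrt v ^ 2 = v := Real.sq_sqrt hv.le
    simp only [Real.sqrt_zero, zero_mul, zero_sub, neg_sub]
    nlinarith
  · have hlog : u * Real.log u - u * Real.log v = u * Real.log (u / v) := by
      rw [Real.log_div (ne_of_gt hu0) (ne_of_gt hv)]; ring
    rw [hlog]
    have hsu : 0 < Real.sqrt u := Real.sqrt_pos.2 hu0
    have hsv : 0 < Real.sqrt v := Real.sqrt_pos.2 hv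
    have huu : Real.sqrt u ^ 2 = u := Real.sq_sqrt hu
    have hvv : Real.sqrt v ^ 2 = v := Real.sq_sqrt hv.le
    by_cases hcase : u ≤ 4 * v
    · -- small case
      have h1 : Real.log (u / v) ≤ u / v - 1 := Real.log_le_sub_one_of_pos (by positivity)
      have h2 : u * Real.log (u / v) ≤ u * (u / v - 1) :=
        mul_le_mul_of_nonneg_left h1 hu
      have h3 : u * (u / v - 1) - u + v = (u - v) ^ 2 / v := by
        field_simp; ring
      have h4 : (u - v) ^ 2 / v ≤ 9 * (Real.sqrt u - Real.sqrt v) ^ 2 := by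
        have hfac : (u - v) ^ 2 = (Real.sqrt u - Real.sqrt v) ^ 2 *
            (Real.sqrt u + Real.sqrt v) ^ 2 := by
          have : u - v = (Real.sqrt u - Real.sqrt v) * (Real.sqrt u + Real.sqrt v) := by
            nlinarith
          rw [this]; ring
        rw [hfac, div_le_iff₀ hv]
        have hub : Real.sqrt u ≤ 2 * Real.sqrt v := by
          have h4v : Real.sqrt (4 * v) = 2 * Real.sqrt v := by
            rw [show (4:ℝ) * v = (2:ℝ)^2 * v by ring, Real.sqrt_mul (by positivity),
              Real.sqrt_sq (by norm_num)]
          calc Real.sqrt u ≤ Real.sqrt (4 * v) := Real.sqrt_le_sqrt hcase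
            _ = 2 * Real.sqrt v := h4v
        have h9 : (Real.sqrt u + Real.sqrt v) ^ 2 ≤ 9 * v := by nlinarith
        nlinarith [mul_le_mul_of_nonneg_left h9 hsq]
      nlinarith
    · -- big case : 4 v < u
      push_neg at hcase
      have h1 : Real.log (u / v) ≤ Real.log T := by
        apply Real.log_le_log (by positivity)
        rw [div_le_iff₀ hv]; linarith [hbd]
      have h2 : u * Real.log (u / v) ≤ u * Real.log T :=
        mul_le_mul_of_nonneg_left h1 hu
      have hub : 2 * Real.sqrt v ≤ Real.sqrt u := by
        have h4v : Real.sqrt (4 * v) = 2 * Real.sqrt v := by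
          rw [show (4:ℝ) * v = (2:ℝ)^2 * v by ring, Real.sqrt_mul (by positivity),
            Real.sqrt_sq (by norm_num)]
        rw [← h4v]
        exact Real.sqrt_le_sqrt hcase.le
      have h3 : u ≤ 4 * (Real.sqrt u - Real.sqrt v) ^ 2 := by nlinarith
      have h4 : u * Real.log T ≤ 4 * Real.log T * (Real.sqrt u - Real.sqrt v) ^ 2 := by
        nlinarith
      nlinarith [hv.le, hcase]


/-- **Log-sum inequality** (finite form, with Lean's `log 0 = 0` conventions). -/
lemma log_sum_ineq {κ : Type*} [Fintype κ] (A B : κ → ℝ)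
    (hA : ∀ ζ, 0 ≤ A ζ) (hB : ∀ ζ, 0 ≤ B ζ) (h0 : ∀ ζ, B ζ = 0 → A ζ = 0) :
    (∑ ζ, A ζ) * Real.log (∑ ζ, A ζ) - (∑ ζ, A ζ) * Real.log (∑ ζ, B ζ) ≤
      ∑ ζ, (A ζ * Real.log (A ζ) - A ζ * Real.log (B ζ)) := by
  set SA := ∑ ζ, A ζ with hSA
  set SB := ∑ ζ, B ζ with hSB
  have hSA0 : 0 ≤ SA := Finset.sum_nonneg fun ζ _ => hA ζ
  have hSB0 : 0 ≤ SB := Finset.sum_nonneg fun ζ _ => hB ζ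
  rcases eq_or_lt_of_le hSB0 with hB0 | hBpos
  · -- all B are zero hence all A are zero
    have hBz : ∀ ζ, B ζ = 0 := by
      intro ζ
      have := (Finset.sum_eq_zero_iff_of_nonneg (fun ζ _ => hB ζ)).1 hB0.symm
      exact this ζ (Finset.mem_univ ζ)
    have hAz : ∀ ζ, A ζ = 0 := fun ζ => h0 ζ (hBz ζ)
    have : SA = 0 := by rw [hSA]; exact Finset.sum_eq_zero fun ζ _ => hAz ζ
    simp [this, hAz]
  · rcases eq_or_lt_of_le hSA0 with hA0 | hApos
    · -- all A are zero
      have hAz : ∀ ζ, A ζ = 0 := by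
        intro ζ
        have := (Finset.sum_eq_zero_iff_of_nonneg (fun ζ _ => hA ζ)).1 hA0.symm
        exact this ζ (Finset.mem_univ ζ)
      simp [← hA0, hAz]
    · -- main case: Jensen for x log x
      have hJ := Real.convexOn_mul_log.map_sum_le (t := Finset.univ)
        (w := fun ζ => B ζ / SB) (p := fun ζ => A ζ / B ζ)
        (fun ζ _ => div_nonneg (hB ζ) hSB0)
        (by rw [← Finset.sum_div]; field_simp; exact hSB.symm)
        (fun ζ _ => Set.mem_Ici.2 (div_nonneg (hA ζ) (hB ζ)))
      simp only [smul_eq_mul] at hJ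
      have hkey : ∀ ζ, B ζ / SB * (A ζ / B ζ) = A ζ / SB := by
        intro ζ
        rcases eq_or_lt_of_le (hB ζ) with hz | hp
        · simp [← hz, h0 ζ hz.symm]
        · field_simp
      have hsum : ∑ ζ, B ζ / SB * (A ζ / B ζ) = SA / SB := by
        simp_rw [hkey]; rw [← Finset.sum_div]
      rw [hsum] at hJ
      -- hJ : (SA/SB) * log (SA/SB) ≤ ∑ (B/SB) • ((A/B) * log (A/B))
      have hterm : ∀ ζ, B ζ / SB * (A ζ / B ζ * Real.log (A ζ / B ζ)) =
          (A ζ * Real.log (A ζ) - A ζ * Real.log (B ζ)) / SB := by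
        intro ζ
        rcases eq_or_lt_of_le (hB ζ) with hz | hp
        · simp [← hz, h0 ζ hz.symm]
        · rcases eq_or_lt_of_le (hA ζ) with haz | hap
          · simp [← haz]
          · rw [Real.log_div (ne_of_gt hap) (ne_of_gt hp)]
            field_simp
      rw [Finset.sum_congr rfl (fun ζ _ => hterm ζ), ← Finset.sum_div] at hJ
      have hlogd : Real.log (SA / SB) = Real.log SA - Real.log SB :=
        Real.log_div (ne_of_gt hApos) (ne_of_gt hBpos)
      rw [hlogd] at hJ
      have := mul_le_mul_of_nonneg_left hJ hBpos.le
      calc SA * Real.log SA - SA * Real.log SB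
          = SB * (SA / SB * (Real.log SA - Real.log SB)) := by field_simp
        _ ≤ SB * ((∑ ζ, (A ζ * Real.log (A ζ) - A ζ * Real.log (B ζ))) / SB) := this
        _ = ∑ ζ, (A ζ * Real.log (A ζ) - A ζ * Real.log (B ζ)) := by field_simp


/-- Convexity of the entropy functional (finite form). -/
lemma ent_convex {ι κ : Type*} [Fintype ι] [Fintype κ] (ν : ι → ℝ) (lam : κ → ℝ)
    (H : κ → ι → ℝ) (hν : ∀ ξ, 0 ≤ ν ξ)
    (hlam : ∀ ζ, 0 ≤ lam ζ) (hH : ∀ ζ ξ, 0 ≤ H ζ ξ) :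
    (∑ ξ, ν ξ * ((∑ ζ, lam ζ * H ζ ξ) * Real.log (∑ ζ, lam ζ * H ζ ξ))) -
      (∑ ξ, ν ξ * (∑ ζ, lam ζ * H ζ ξ)) * Real.log (∑ ξ, ν ξ * (∑ ζ, lam ζ * H ζ ξ)) ≤
    ∑ ζ, lam ζ * ((∑ ξ, ν ξ * (H ζ ξ * Real.log (H ζ ξ))) -
      (∑ ξ, ν ξ * H ζ ξ) * Real.log (∑ ξ, ν ξ * H ζ ξ)) := by
  set G : ι → ℝ := fun ξ => ∑ ζ, lam ζ * H ζ ξ with hG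
  set b : κ → ℝ := fun ζ => ∑ ξ, ν ξ * H ζ ξ with hb
  set m : ℝ := ∑ ξ, ν ξ * G ξ with hm
  have hbnn : ∀ ζ, 0 ≤ b ζ := fun ζ =>
    Finset.sum_nonneg fun ξ _ => mul_nonneg (hν ξ) (hH ζ ξ)
  have hmb : m = ∑ ζ, lam ζ * b ζ := by
    rw [hm, hb, hG]
    simp_rw [Finset.mul_sum]
    rw [Finset.sum_comm]
    exact Finset.sum_congr rfl fun ζ _ => Finset.sum_congr rfl fun ξ _ => by ring
  have h1 : m * Real.log m = ∑ ξ, ν ξ * (G ξ * Real.log m) := by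
    rw [hm, Finset.sum_mul]
    exact Finset.sum_congr rfl fun ξ _ => by ring
  have hL : (∑ ξ, ν ξ * (G ξ * Real.log (G ξ))) - m * Real.log m
      = ∑ ξ, ν ξ * (G ξ * Real.log (G ξ) - G ξ * Real.log m) := by
    rw [h1, ← Finset.sum_sub_distrib]
    exact Finset.sum_congr rfl fun ξ _ => by ring
  have h2 : ∀ ζ, (∑ ξ, ν ξ * (H ζ ξ * Real.log (H ζ ξ))) - b ζ * Real.log (b ζ)
      = ∑ ξ, ν ξ * (H ζ ξ * Real.log (H ζ ξ) - H ζ ξ * Real.log (b ζ)) := by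
    intro ζ
    have : b ζ * Real.log (b ζ) = ∑ ξ, ν ξ * (H ζ ξ * Real.log (b ζ)) := by
      conv_lhs => rw [hb]
      rw [Finset.sum_mul]
      exact Finset.sum_congr rfl fun ξ _ => by ring
    rw [this, ← Finset.sum_sub_distrib]
    exact Finset.sum_congr rfl fun ξ _ => by ring
  rw [hL]
  calc ∑ ξ, ν ξ * (G ξ * Real.log (G ξ) - G ξ * Real.log m)
      ≤ ∑ ξ, ν ξ * (∑ ζ, lam ζ * (H ζ ξ * Real.log (H ζ ξ) - H ζ ξ * Real.log (b ζ))) := by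
        apply Finset.sum_le_sum
        intro ξ _
        rcases eq_or_lt_of_le (hν ξ) with hz | hp
        · rw [← hz, zero_mul, zero_mul]
        · apply mul_le_mul_of_nonneg_left _ (hν ξ)
          have hBm : (∑ ζ, lam ζ * b ζ) = m := hmb.symm
          have hkey := log_sum_ineq (fun ζ => lam ζ * H ζ ξ) (fun ζ => lam ζ * b ζ)
            (fun ζ => mul_nonneg (hlam ζ) (hH ζ ξ))
            (fun ζ => mul_nonneg (hlam ζ) (hbnn ζ))
            (fun ζ hzero => by
              show lam ζ * H ζ ξ = 0
              replace hzero : lam ζ * b ζ = 0 := hzero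
              rcases mul_eq_zero.1 hzero with h | h
              · rw [h, zero_mul]
              · have hle : ν ξ * H ζ ξ ≤ b ζ := by
                  rw [hb]
                  exact Finset.single_le_sum
                    (fun ξ' _ => mul_nonneg (hν ξ') (hH ζ ξ')) (Finset.mem_univ ξ)
                have hz2 : ν ξ * H ζ ξ = 0 :=
                  le_antisymm (h ▸ hle) (mul_nonneg (hν ξ) (hH ζ ξ))
                have hH0 : H ζ ξ = 0 := by
                  rcases mul_eq_zero.1 hz2 with h' | h'
                  · exact absurd h' (ne_of_gt hp)
                  · exact h'
                rw [hH0, mul_zero])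
          rw [hBm] at hkey
          refine le_trans hkey (le_of_eq (Finset.sum_congr rfl fun ζ _ => ?_))
          show lam ζ * H ζ ξ * Real.log (lam ζ * H ζ ξ) -
              lam ζ * H ζ ξ * Real.log (lam ζ * b ζ) =
              lam ζ * (H ζ ξ * Real.log (H ζ ξ) - H ζ ξ * Real.log (b ζ))
          rcases eq_or_lt_of_le (hlam ζ) with hlz | hlp
          · rw [← hlz]; simp
          rcases eq_or_lt_of_le (hH ζ ξ) with hHz | hHp
          · rw [← hHz]; simp
          · have hbp : 0 < b ζ := by
              have hle : ν ξ * H ζ ξ ≤ b ζ := by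
                rw [hb]
                exact Finset.single_le_sum
                  (fun ξ' _ => mul_nonneg (hν ξ') (hH ζ ξ')) (Finset.mem_univ ξ)
              exact lt_of_lt_of_le (mul_pos hp hHp) hle
            rw [Real.log_mul (ne_of_gt hlp) (ne_of_gt hHp),
              Real.log_mul (ne_of_gt hlp) (ne_of_gt hbp)]
            ring
    _ = ∑ ζ, lam ζ * ((∑ ξ, ν ξ * (H ζ ξ * Real.log (H ζ ξ))) -
          (∑ ξ, ν ξ * H ζ ξ) * Real.log (∑ ξ, ν ξ * H ζ ξ)) := by
        have h2' : ∀ ζ, (∑ ξ, ν ξ * (H ζ ξ * Real.log (H ζ ξ))) -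
            (∑ ξ, ν ξ * H ζ ξ) * Real.log (∑ ξ, ν ξ * H ζ ξ)
            = ∑ ξ, ν ξ * (H ζ ξ * Real.log (H ζ ξ) - H ζ ξ * Real.log (b ζ)) := h2
        simp_rw [h2']
        simp_rw [Finset.mul_sum]
        rw [Finset.sum_comm]
        exact Finset.sum_congr rfl fun ζ _ => Finset.sum_congr rfl fun ξ _ => by ring


/-- Finite-space log-Sobolev inequality with constant `18 + 8 log T`, where `T` bounds
`sup F² / mean F²`. -/
lemma finite_lsi {ι : Type*} [Fintype ι] (ν F : ι → ℝ) (T : ℝ)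
    (hν : ∀ ζ, 0 ≤ ν ζ) (hν1 : ∑ ζ, ν ζ = 1) (hT : 1 ≤ T)
    (hbd : ∀ ξ, ν ξ ≠ 0 → F ξ ^ 2 ≤ T * ∑ ζ, ν ζ * F ζ ^ 2) :
    (∑ ζ, ν ζ * (F ζ ^ 2 * Real.log (F ζ ^ 2))) -
      (∑ ζ, ν ζ * F ζ ^ 2) * Real.log (∑ ζ, ν ζ * F ζ ^ 2) ≤
    (18 + 8 * Real.log T) * ((∑ ζ, ν ζ * F ζ ^ 2) - (∑ ζ, ν ζ * F ζ) ^ 2) := by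
  have hlogT : 0 ≤ Real.log T := Real.log_nonneg hT
  set v : ℝ := ∑ ζ, ν ζ * F ζ ^ 2 with hv
  have hv0 : 0 ≤ v := Finset.sum_nonneg fun ζ _ => mul_nonneg (hν ζ) (sq_nonneg _)
  rcases eq_or_lt_of_le hv0 with hvz | hvp
  · -- v = 0 : everything vanishes
    have hterm : ∀ ζ, ν ζ * F ζ ^ 2 = 0 := by
      intro ζ
      have := (Finset.sum_eq_zero_iff_of_nonneg
        (fun ζ _ => mul_nonneg (hν ζ) (sq_nonneg (F ζ)))).1 hvz.symm
      exact this ζ (Finset.mem_univ ζ)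
    have hF : ∀ ζ, ν ζ ≠ 0 → F ζ = 0 := by
      intro ζ hζ
      rcases mul_eq_zero.1 (hterm ζ) with h | h
      · exact absurd h hζ
      · exact pow_eq_zero_iff (n := 2) (by norm_num) |>.1 h
    have h1 : (∑ ζ, ν ζ * (F ζ ^ 2 * Real.log (F ζ ^ 2))) = 0 := by
      apply Finset.sum_eq_zero
      intro ζ _
      by_cases hζ : ν ζ = 0
      · rw [hζ, zero_mul]
      · rw [hF ζ hζ]; simp
    have h2 : (∑ ζ, ν ζ * F ζ) = 0 := by
      apply Finset.sum_eq_zero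
      intro ζ _
      by_cases hζ : ν ζ = 0
      · rw [hζ, zero_mul]
      · rw [hF ζ hζ, mul_zero]
    rw [h1, h2, ← hvz]
    simp
  · -- main case
    set K : ℝ := 9 + 4 * Real.log T with hK
    have hK0 : 0 ≤ K := by rw [hK]; linarith
    have hsq : Real.sqrt v ^ 2 = v := Real.sq_sqrt hv0
    -- entropy = ∑ ν (u log u - u log v - u + v)
    have hE : (∑ ζ, ν ζ * (F ζ ^ 2 * Real.log (F ζ ^ 2))) - v * Real.log v
        = ∑ ζ, ν ζ * (F ζ ^ 2 * Real.log (F ζ ^ 2) - F ζ ^ 2 * Real.log v - F ζ ^ 2 + v) := by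
      have e1 : ∑ ζ, ν ζ * (F ζ ^ 2 * Real.log v) = v * Real.log v := by
        rw [hv, Finset.sum_mul]
        exact Finset.sum_congr rfl fun ζ _ => by ring
      have e2 : ∑ ζ, ν ζ * v = v := by
        rw [← Finset.sum_mul, hν1, one_mul]
      calc (∑ ζ, ν ζ * (F ζ ^ 2 * Real.log (F ζ ^ 2))) - v * Real.log v
          = (∑ ζ, ν ζ * (F ζ ^ 2 * Real.log (F ζ ^ 2))) -
            (∑ ζ, ν ζ * (F ζ ^ 2 * Real.log v)) - (∑ ζ, ν ζ * F ζ ^ 2) + (∑ ζ, ν ζ * v) := by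
            rw [e1, e2, ← hv]; ring
        _ = _ := by
            rw [← Finset.sum_sub_distrib, ← Finset.sum_sub_distrib, ← Finset.sum_add_distrib]
            exact Finset.sum_congr rfl fun ζ _ => by ring
    rw [hE]
    -- termwise bound by K * (|F| - √v)²
    have hterm : ∀ ζ, ν ζ * (F ζ ^ 2 * Real.log (F ζ ^ 2) - F ζ ^ 2 * Real.log v - F ζ ^ 2 + v)
        ≤ ν ζ * (K * (|F ζ| - Real.sqrt v) ^ 2) := by
      intro ζ
      by_cases hζ : ν ζ = 0
      · rw [hζ, zero_mul, zero_mul]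
      · apply mul_le_mul_of_nonneg_left _ (hν ζ)
        have := core_ineq (F ζ ^ 2) v T (sq_nonneg _) hvp hT (hbd ζ hζ)
        rwa [Real.sqrt_sq_eq_abs] at this
    have hsum := Finset.sum_le_sum (s := Finset.univ) (fun ζ _ => hterm ζ)
    refine le_trans hsum ?_
    -- ∑ ν K (|F| - √v)² = K (2v - 2√v A)
    set A : ℝ := ∑ ζ, ν ζ * |F ζ| with hA
    have hA0 : 0 ≤ A := Finset.sum_nonneg fun ζ _ => mul_nonneg (hν ζ) (abs_nonneg _)
    have hexp : ∑ ζ, ν ζ * (K * (|F ζ| - Real.sqrt v) ^ 2)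
        = K * (2 * v - 2 * Real.sqrt v * A) := by
      have : ∀ ζ, ν ζ * (K * (|F ζ| - Real.sqrt v) ^ 2)
          = K * (ν ζ * F ζ ^ 2) - 2 * K * Real.sqrt v * (ν ζ * |F ζ|) + K * v * ν ζ := by
        intro ζ
        rw [sub_sq, sq_abs, hsq]
        ring
      rw [Finset.sum_congr rfl fun ζ _ => this ζ]
      rw [Finset.sum_add_distrib, Finset.sum_sub_distrib, ← Finset.mul_sum, ← Finset.mul_sum,
        ← Finset.mul_sum, ← hv, ← hA, hν1]
      ring
    rw [hexp]
    -- Cauchy-Schwarz: A² ≤ v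
    have hCS : A ^ 2 ≤ v := by
      have := Finset.sum_mul_sq_le_sq_mul_sq Finset.univ
        (fun ζ => Real.sqrt (ν ζ)) (fun ζ => Real.sqrt (ν ζ) * |F ζ|)
      have e1 : ∀ ζ, Real.sqrt (ν ζ) * (Real.sqrt (ν ζ) * |F ζ|) = ν ζ * |F ζ| := by
        intro ζ
        rw [← mul_assoc, Real.mul_self_sqrt (hν ζ)]
      have e2 : ∀ ζ, Real.sqrt (ν ζ) ^ 2 = ν ζ := fun ζ => Real.sq_sqrt (hν ζ)
      have e3 : ∀ ζ, (Real.sqrt (ν ζ) * |F ζ|) ^ 2 = ν ζ * F ζ ^ 2 := by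
        intro ζ
        rw [mul_pow, Real.sq_sqrt (hν ζ), sq_abs]
      rw [Finset.sum_congr rfl fun ζ _ => e1 ζ, Finset.sum_congr rfl fun ζ _ => e2 ζ,
        Finset.sum_congr rfl fun ζ _ => e3 ζ, hν1, one_mul] at this
      exact this
    have hAv : A ≤ Real.sqrt v := by
      rw [show A = Real.sqrt (A ^ 2) from (Real.sqrt_sq hA0).symm]
      exact Real.sqrt_le_sqrt hCS
    -- |∑ ν F| ≤ A
    have hMF : (∑ ζ, ν ζ * F ζ) ^ 2 ≤ A ^ 2 := by
      have h1 : |∑ ζ, ν ζ * F ζ| ≤ A := by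
        refine le_trans (Finset.abs_sum_le_sum_abs _ _) ?_
        rw [hA]
        apply Finset.sum_le_sum
        intro ζ _
        rw [abs_mul, abs_of_nonneg (hν ζ)]
      calc (∑ ζ, ν ζ * F ζ) ^ 2 = |∑ ζ, ν ζ * F ζ| ^ 2 := (sq_abs _).symm
        _ ≤ A ^ 2 := by nlinarith [abs_nonneg (∑ ζ, ν ζ * F ζ)]
    -- 2v - 2√v A ≤ 2(v - A²) ≤ 2(v - (∑νF)²)
    have hfin : K * (2 * v - 2 * Real.sqrt v * A) ≤ K * (2 * (v - (∑ ζ, ν ζ * F ζ) ^ 2)) := by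
      apply mul_le_mul_of_nonneg_left _ hK0
      nlinarith [hsq, hAv, hA0, Real.sqrt_nonneg v]
    refine le_trans hfin ?_
    rw [hK]
    ring_nf
    nlinarith [hMF, hCS]
-- Part 6: block entropy operator, telescoping, Jensen
section P6

variable {q : ℝ} {ℓ N : ℕ}

/-- The conditional entropy of `g` on block `i`. -/
noncomputable def entOp (q : ℝ) (ℓ N : ℕ) (i : ℤ) (g : S ℓ N → ℝ) (η : S ℓ N) : ℝ :=
  condE q ℓ N i (fun ξ => g ξ * Real.log (g ξ)) η -
    condE q ℓ N i g η * Real.log (condE q ℓ N i g η)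

lemma step_eq (hq0 : 0 < q) (hq1 : q < 1) {k : ℕ} (hk : k < N) (g : S ℓ N → ℝ) :
    avg q ℓ N (fun η => g η * Real.log (EE q ℓ N k g η)) -
      avg q ℓ N (fun η => g η * Real.log (EE q ℓ N (k+1) g η)) =
    avg q ℓ N (entOp q ℓ N ((k:ℤ)+1) (EE q ℓ N k g)) := by
  set i : ℤ := (k:ℤ)+1 with hidef
  have hi : i ∈ Finset.Icc (1:ℤ) (N:ℤ) := block_mem hk
  set u : S ℓ N → ℝ := EE q ℓ N k g with hu
  set ψ : S ℓ N → ℝ := fun η => Real.log (u η) - Real.log (condE q ℓ N i u η) with hψ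
  have hEk1 : EE q ℓ N (k+1) g = condE q ℓ N i u := by rw [EE_succ]
  have hindep : ∀ m : ℕ, 1 ≤ m → m ≤ k → IndepOf ℓ N (m:ℤ) ψ := by
    intro m h1 h2 η ζ
    have hui : IndepOf ℓ N (m:ℤ) u := EE_indep g k m h1 h2
    have hci : IndepOf ℓ N (m:ℤ) (condE q ℓ N i u) := by
      refine condE_indep_other ?_ hui
      intro hc
      have : ((m:ℕ):ℤ) ≤ (k:ℤ) := by exact_mod_cast h2
      omega
    rw [hψ]
    simp only
    rw [hui η ζ, hci η ζ]
  have e1 : avg q ℓ N (fun η => g η * Real.log (EE q ℓ N k g η)) -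
      avg q ℓ N (fun η => g η * Real.log (EE q ℓ N (k+1) g η)) =
      avg q ℓ N (fun η => g η * ψ η) := by
    rw [← avg_sub]
    congr 1
    funext η
    rw [hEk1, hψ]
    simp only
    ring
  rw [e1, tower hq0 hq1 hk.le g ψ hindep]
  have e2 : avg q ℓ N (fun η => u η * ψ η) =
      avg q ℓ N (fun η => u η * Real.log (u η)) -
      avg q ℓ N (fun η => u η * Real.log (condE q ℓ N i u η)) := by
    rw [← avg_sub]
    congr 1
    funext η
    rw [hψ]
    simp only
    ring
  rw [e2]
  have e3 : avg q ℓ N (fun η => u η * Real.log (u η)) =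
      avg q ℓ N (condE q ℓ N i (fun ξ => u ξ * Real.log (u ξ))) :=
    (avg_condE hq0 hq1 hi _).symm
  have hlogindep : IndepOf ℓ N i (fun η => Real.log (condE q ℓ N i u η)) := by
    intro η ζ
    simp only
    rw [condE_indep_self i u η ζ]
  have e4 : avg q ℓ N (fun η => u η * Real.log (condE q ℓ N i u η)) =
      avg q ℓ N (fun η => condE q ℓ N i u η * Real.log (condE q ℓ N i u η)) :=
    avg_mul_condE hq0 hq1 hi u _ hlogindep
  rw [e3, e4, ← avg_sub]
  rfl

lemma entOp_condE_le (hq0 : 0 < q) (hq1 : q < 1) {i j : ℤ}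
    (hi : i ∈ Finset.Icc (1:ℤ) (N:ℤ)) (hj : j ∈ Finset.Icc (1:ℤ) (N:ℤ)) (hij : i ≠ j)
    {h : S ℓ N → ℝ} (hh : ∀ η, 0 ≤ h η) (η : S ℓ N) :
    entOp q ℓ N i (condE q ℓ N j h) η ≤ condE q ℓ N j (entOp q ℓ N i h) η := by
  set ν : S ℓ N → ℝ := fun ξ => blockW q ℓ N i ξ / Zb q ℓ N i with hν
  set lam : S ℓ N → ℝ := fun ζ => blockW q ℓ N j ζ / Zb q ℓ N j with hlam
  set H : S ℓ N → S ℓ N → ℝ := fun ζ ξ => h (patch ℓ N i (patch ℓ N j η ζ) ξ) with hH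
  have hν0 : ∀ ξ, 0 ≤ ν ξ := fun ξ =>
    div_nonneg (blockW_nonneg hq0 hq1 i ξ) (Zb_pos hq0 hq1 hi).le
  have hlam0 : ∀ ζ, 0 ≤ lam ζ := fun ζ =>
    div_nonneg (blockW_nonneg hq0 hq1 j ζ) (Zb_pos hq0 hq1 hj).le
  have hH0 : ∀ ζ ξ, 0 ≤ H ζ ξ := fun ζ ξ => hh _
  have hEq1 : ∀ ξ, condE q ℓ N j h (patch ℓ N i η ξ) = ∑ ζ, lam ζ * H ζ ξ := by
    intro ξ
    rw [condE_eq]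
    exact Finset.sum_congr rfl fun ζ _ => by rw [patch_comm hij η ζ ξ]
  have hEq2 : ∀ ζ, entOp q ℓ N i h (patch ℓ N j η ζ) =
      (∑ ξ, ν ξ * (H ζ ξ * Real.log (H ζ ξ))) -
        (∑ ξ, ν ξ * H ζ ξ) * Real.log (∑ ξ, ν ξ * H ζ ξ) := by
    intro ζ
    rw [entOp, condE_eq, condE_eq]
  have hL1 : condE q ℓ N i
      (fun ξ' => condE q ℓ N j h ξ' * Real.log (condE q ℓ N j h ξ')) η =
      ∑ ξ, ν ξ * ((∑ ζ, lam ζ * H ζ ξ) * Real.log (∑ ζ, lam ζ * H ζ ξ)) := by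
    rw [condE_eq]
    exact Finset.sum_congr rfl fun ξ _ => by rw [hEq1 ξ]
  have hL2 : condE q ℓ N i (condE q ℓ N j h) η = ∑ ξ, ν ξ * (∑ ζ, lam ζ * H ζ ξ) := by
    rw [condE_eq]
    exact Finset.sum_congr rfl fun ξ _ => by rw [hEq1 ξ]
  have hR1 : condE q ℓ N j (entOp q ℓ N i h) η =
      ∑ ζ, lam ζ * ((∑ ξ, ν ξ * (H ζ ξ * Real.log (H ζ ξ))) -
        (∑ ξ, ν ξ * H ζ ξ) * Real.log (∑ ξ, ν ξ * H ζ ξ)) := by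
    rw [condE_eq]
    exact Finset.sum_congr rfl fun ζ _ => by rw [hEq2 ζ]
  rw [entOp, hL1, hL2, hR1]
  exact ent_convex ν lam H hν0 hlam0 hH0

lemma entOp_EE_le (hq0 : 0 < q) (hq1 : q < 1) :
    ∀ (k : ℕ), k ≤ N → ∀ {i : ℤ}, i ∈ Finset.Icc (1:ℤ) (N:ℤ) → (k:ℤ) < i →
    ∀ {g : S ℓ N → ℝ}, (∀ η, 0 ≤ g η) → ∀ η,
      entOp q ℓ N i (EE q ℓ N k g) η ≤ EE q ℓ N k (entOp q ℓ N i g) η := by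
  intro k
  induction k with
  | zero => intro _ i hi _ g hg η; exact le_rfl
  | succ n ih =>
    intro hk i hi hlt g hg η
    have hlt' : ((n:ℕ):ℤ) + 1 < i := by push_cast at hlt ⊢; omega
    have hjmem := block_mem (show n < N by omega)
    have hij : i ≠ (n:ℤ)+1 := by omega
    rw [EE_succ, EE_succ]
    calc entOp q ℓ N i (condE q ℓ N ((n:ℤ)+1) (EE q ℓ N n g)) η
        ≤ condE q ℓ N ((n:ℤ)+1) (entOp q ℓ N i (EE q ℓ N n g)) η :=
          entOp_condE_le hq0 hq1 hi hjmem hij (EE_nonneg hq0 hq1 n hg) η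
      _ ≤ condE q ℓ N ((n:ℤ)+1) (EE q ℓ N n (entOp q ℓ N i g)) η :=
          condE_mono hq0 hq1 hjmem
            (fun η' => ih (by omega) hi (by omega) hg η') η

lemma avg_entOp_le (hq0 : 0 < q) (hq1 : q < 1) {k : ℕ} (hk : k < N)
    {g : S ℓ N → ℝ} (hg : ∀ η, 0 ≤ g η) :
    avg q ℓ N (entOp q ℓ N ((k:ℤ)+1) (EE q ℓ N k g)) ≤
      avg q ℓ N (entOp q ℓ N ((k:ℤ)+1) g) := by
  have hi : ((k:ℤ)+1) ∈ Finset.Icc (1:ℤ) (N:ℤ) := block_mem hk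
  have h1 := avg_mono hq0 hq1
    (entOp_EE_le hq0 hq1 k hk.le hi (by omega) hg)
  exact h1.trans (le_of_eq (avg_EE hq0 hq1 hk.le _))

end P6
-- Part 7: per-block log-Sobolev inequality
section P7

variable {q : ℝ} {ℓ N : ℕ}

lemma sum_pi_prod (a b : ↥(Lam ℓ N) → ℝ) :
    ∑ ζ : S ℓ N, (∏ y : ↥(Lam ℓ N), (if ζ y then a y else b y))
      = ∏ y : ↥(Lam ℓ N), (a y + b y) := by
  classical
  have e := Finset.prod_univ_sum (t := fun _ : ↥(Lam ℓ N) => (Finset.univ : Finset Bool))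
    (f := fun y c => if c then a y else b y)
  rw [Fintype.piFinset_univ] at e
  have e2 : ∀ y : ↥(Lam ℓ N), (∑ c : Bool, if c then a y else b y) = a y + b y := by
    intro y
    rw [Fintype.sum_bool]
    simp
  rw [Finset.prod_congr rfl fun y _ => e2 y] at e
  rw [← e]

lemma card_blockFilter {i : ℤ} (hi : i ∈ Finset.Icc (1:ℤ) (N:ℤ)) :
    (Finset.univ.filter (fun y : ↥(Lam ℓ N) => (y:ℤ) ∈ blockI ℓ i)).card = ℓ + 1 := by
  have h1 : (Finset.univ.filter (fun y : ↥(Lam ℓ N) => (y:ℤ) ∈ blockI ℓ i)).card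
      = (blockI ℓ i).card := by
    refine Finset.card_bij
      (fun (y : ↥(Lam ℓ N)) (_ : y ∈ Finset.univ.filter
        (fun y : ↥(Lam ℓ N) => (y:ℤ) ∈ blockI ℓ i)) => (y:ℤ))
      (fun y hy => (Finset.mem_filter.1 hy).2)
      (fun a ha b hb hab => Subtype.ext hab)
      (fun x hx => ⟨⟨x, blockI_subset_Lam hi hx⟩,
        Finset.mem_filter.2 ⟨Finset.mem_univ _, hx⟩, rfl⟩)
  rw [h1, blockI, Int.card_Icc,
    show i * ((ℓ:ℤ)+1) + 1 - (i*((ℓ:ℤ)+1) - (ℓ:ℤ)) = (ℓ:ℤ)+1 by ring]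
  omega

lemma Zb_le (hq0 : 0 < q) (hq1 : q < 1) (i : ℤ) :
    Zb q ℓ N i ≤ 2 ^ (Finset.univ.filter
      (fun y : ↥(Lam ℓ N) => ¬ (y:ℤ) ∈ blockI ℓ i)).card := by
  have h1 : Zb q ℓ N i ≤ ∑ ζ : S ℓ N, PB q ℓ N i ζ := by
    rw [Zb]
    refine Finset.sum_le_sum fun ζ _ => ?_
    rw [blockW_eq]
    calc (if Iblk ℓ N i ζ then (1:ℝ) else 0) * PB q ℓ N i ζ
        ≤ 1 * PB q ℓ N i ζ := by
          apply mul_le_mul_of_nonneg_right _ (PB_nonneg hq0 hq1 i ζ)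
          split <;> norm_num
      _ = PB q ℓ N i ζ := one_mul _
  refine h1.trans (le_of_eq ?_)
  calc ∑ ζ : S ℓ N, PB q ℓ N i ζ
      = ∑ ζ : S ℓ N, ∏ y : ↥(Lam ℓ N),
          (if ζ y then (if (y:ℤ) ∈ blockI ℓ i then 1-q else 1)
            else (if (y:ℤ) ∈ blockI ℓ i then q else 1)) := by
        refine Finset.sum_congr rfl fun ζ _ => ?_
        rw [PB, Finset.prod_filter]
        refine Finset.prod_congr rfl fun y _ => ?_
        by_cases hy : (y:ℤ) ∈ blockI ℓ i <;> by_cases hz : ζ y <;> simp [hy, hz]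
    _ = ∏ y : ↥(Lam ℓ N), ((if (y:ℤ) ∈ blockI ℓ i then 1-q else 1) +
          (if (y:ℤ) ∈ blockI ℓ i then q else 1)) :=
        sum_pi_prod _ _
    _ = ∏ y : ↥(Lam ℓ N), (if (y:ℤ) ∈ blockI ℓ i then (1:ℝ) else 2) := by
        refine Finset.prod_congr rfl fun y _ => ?_
        by_cases hy : (y:ℤ) ∈ blockI ℓ i <;> simp [hy] <;> ring
    _ = 2 ^ (Finset.univ.filter
        (fun y : ↥(Lam ℓ N) => ¬ (y:ℤ) ∈ blockI ℓ i)).card := by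
        rw [← Finset.prod_filter_mul_prod_filter_not
          Finset.univ (fun y : ↥(Lam ℓ N) => (y:ℤ) ∈ blockI ℓ i)]
        rw [Finset.prod_congr rfl (fun y hy => if_pos (Finset.mem_filter.1 hy).2),
          Finset.prod_congr rfl (fun y (hy : y ∈ Finset.univ.filter _) =>
            if_neg (Finset.mem_filter.1 hy).2),
          Finset.prod_const_one, one_mul, Finset.prod_const]

lemma weight_bound (hq0 : 0 < q) (hq1 : q < 1) {i : ℤ}
    (hi : i ∈ Finset.Icc (1:ℤ) (N:ℤ)) (η ξ : S ℓ N) (hξ : blockW q ℓ N i ξ ≠ 0)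
    (f : S ℓ N → ℝ) :
    (min q (1-q))^(ℓ+1) * Zb q ℓ N i * f (patch ℓ N i η ξ) ^ 2 ≤
      ∑ ζ : S ℓ N, blockW q ℓ N i ζ * f (patch ℓ N i η ζ) ^ 2 := by
  have hm0 : 0 < min q (1-q) := lt_min hq0 (by linarith)
  set m0 : ℝ := min q (1-q) with hm0def
  set cls : S ℓ N → ℝ := fun ζ => ∏ y : ↥(Lam ℓ N),
    (if ζ y then (if (y:ℤ) ∈ blockI ℓ i then (if ξ y then 1-q else 0) else 1)
      else (if (y:ℤ) ∈ blockI ℓ i then (if ξ y then 0 else q) else 1)) with hcls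
  have hIξ : Iblk ℓ N i ξ := by
    by_contra hc
    apply hξ
    rw [blockW_eq, if_neg hc, zero_mul]
  -- termwise bound
  have hA : ∀ ζ : S ℓ N, cls ζ * f (patch ℓ N i η ξ) ^ 2 ≤
      blockW q ℓ N i ζ * f (patch ℓ N i η ζ) ^ 2 := by
    intro ζ
    by_cases hcl : ∀ y : ↥(Lam ℓ N), (y:ℤ) ∈ blockI ℓ i → ζ y = ξ y
    · have hFe : patch ℓ N i η ζ = patch ℓ N i η ξ := patch_congr_block i η ζ ξ hcl
      have hclsPB : cls ζ = PB q ℓ N i ζ := by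
        rw [hcls, PB, Finset.prod_filter]
        refine Finset.prod_congr rfl fun y _ => ?_
        by_cases hy : (y:ℤ) ∈ blockI ℓ i
        · rw [if_pos hy]
          cases hzy : ζ y
          · have : ξ y = false := by rw [← hcl y hy, hzy]
            simp [hzy, this, hy]
          · have : ξ y = true := by rw [← hcl y hy, hzy]
            simp [hzy, this, hy]
        · by_cases hzy : ζ y <;> simp [hy, hzy]
      have hIζ : Iblk ℓ N i ζ := by
        rw [Iblk_congr hi (fun y hy => hcl y hy)]
        exact hIξ
      rw [hFe, hclsPB, blockW_eq, if_pos hIζ, one_mul]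
    · push_neg at hcl
      obtain ⟨y, hy, hne⟩ := hcl
      have hz : cls ζ = 0 := by
        rw [hcls]
        refine Finset.prod_eq_zero (Finset.mem_univ y) ?_
        cases hzy : ζ y
        · have : ξ y = true := by
            cases hξy : ξ y
            · exact absurd (by rw [hzy, hξy]) hne
            · rfl
          simp [hzy, hy, this]
        · have : ξ y = false := by
            cases hξy : ξ y
            · rfl
            · exact absurd (by rw [hzy, hξy]) hne
          simp [hzy, hy, this]
      rw [hz, zero_mul]
      exact mul_nonneg (blockW_nonneg hq0 hq1 i ζ) (sq_nonneg _)
  -- total class weight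
  have hB : ∑ ζ : S ℓ N, cls ζ =
      (∏ y ∈ Finset.univ.filter (fun y : ↥(Lam ℓ N) => (y:ℤ) ∈ blockI ℓ i),
        (if ξ y then 1-q else q)) *
      2 ^ (Finset.univ.filter (fun y : ↥(Lam ℓ N) => ¬ (y:ℤ) ∈ blockI ℓ i)).card := by
    rw [hcls]
    calc ∑ ζ : S ℓ N, ∏ y : ↥(Lam ℓ N),
        (if ζ y then (if (y:ℤ) ∈ blockI ℓ i then (if ξ y then 1-q else 0) else 1)
          else (if (y:ℤ) ∈ blockI ℓ i then (if ξ y then 0 else q) else 1))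
        = ∏ y : ↥(Lam ℓ N),
          ((if (y:ℤ) ∈ blockI ℓ i then (if ξ y then 1-q else 0) else 1) +
           (if (y:ℤ) ∈ blockI ℓ i then (if ξ y then 0 else q) else 1)) :=
          sum_pi_prod _ _
      _ = ∏ y : ↥(Lam ℓ N), (if (y:ℤ) ∈ blockI ℓ i then (if ξ y then 1-q else q) else 2) := by
          refine Finset.prod_congr rfl fun y _ => ?_
          by_cases hy : (y:ℤ) ∈ blockI ℓ i
          · cases hξy : ξ y <;> simp [hy, hξy]
          · simp [hy]; ring
      _ = _ := by
          rw [← Finset.prod_filter_mul_prod_filter_not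
            Finset.univ (fun y : ↥(Lam ℓ N) => (y:ℤ) ∈ blockI ℓ i)]
          rw [Finset.prod_congr rfl (fun y hy => if_pos (Finset.mem_filter.1 hy).2),
            Finset.prod_congr rfl (fun y (hy : y ∈ Finset.univ.filter _) =>
              if_neg (Finset.mem_filter.1 hy).2),
            Finset.prod_const]
  -- block product lower bound
  have hC : m0 ^ (ℓ+1) ≤
      ∏ y ∈ Finset.univ.filter (fun y : ↥(Lam ℓ N) => (y:ℤ) ∈ blockI ℓ i),
        (if ξ y then 1-q else q) := by
    have hprod := Finset.prod_le_prod (s := Finset.univ.filter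
        (fun y : ↥(Lam ℓ N) => (y:ℤ) ∈ blockI ℓ i))
      (f := fun _ => m0) (g := fun y => if ξ y then 1-q else q)
      (fun _ _ => hm0.le)
      (fun y _ => by
        show m0 ≤ if ξ y = true then 1 - q else q
        split
        · exact min_le_right _ _
        · exact min_le_left _ _)
    rwa [Finset.prod_const, card_blockFilter hi] at hprod
  have hsq : (0:ℝ) ≤ f (patch ℓ N i η ξ) ^ 2 := sq_nonneg _
  have h2off : (0:ℝ) ≤ 2 ^ (Finset.univ.filter
      (fun y : ↥(Lam ℓ N) => ¬ (y:ℤ) ∈ blockI ℓ i)).card := by positivity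
  calc m0 ^ (ℓ+1) * Zb q ℓ N i * f (patch ℓ N i η ξ) ^ 2
      ≤ m0 ^ (ℓ+1) * 2 ^ (Finset.univ.filter
          (fun y : ↥(Lam ℓ N) => ¬ (y:ℤ) ∈ blockI ℓ i)).card * f (patch ℓ N i η ξ) ^ 2 := by
        apply mul_le_mul_of_nonneg_right _ hsq
        exact mul_le_mul_of_nonneg_left (Zb_le hq0 hq1 i) (by positivity)
    _ ≤ (∏ y ∈ Finset.univ.filter (fun y : ↥(Lam ℓ N) => (y:ℤ) ∈ blockI ℓ i),
          (if ξ y then 1-q else q)) * 2 ^ (Finset.univ.filter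
          (fun y : ↥(Lam ℓ N) => ¬ (y:ℤ) ∈ blockI ℓ i)).card * f (patch ℓ N i η ξ) ^ 2 := by
        apply mul_le_mul_of_nonneg_right _ hsq
        exact mul_le_mul_of_nonneg_right hC h2off
    _ = (∑ ζ : S ℓ N, cls ζ) * f (patch ℓ N i η ξ) ^ 2 := by rw [hB]
    _ = ∑ ζ : S ℓ N, cls ζ * f (patch ℓ N i η ξ) ^ 2 := Finset.sum_mul _ _ _
    _ ≤ ∑ ζ : S ℓ N, blockW q ℓ N i ζ * f (patch ℓ N i η ζ) ^ 2 :=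
        Finset.sum_le_sum fun ζ _ => hA ζ

end P7
-- Part 8: final assembly
section P8

variable {q : ℝ} {ℓ N : ℕ}

lemma sq_avg_le {ι : Type*} [Fintype ι] (ν F : ι → ℝ) (hν : ∀ ζ, 0 ≤ ν ζ)
    (hν1 : ∑ ζ, ν ζ = 1) : (∑ ζ, ν ζ * F ζ) ^ 2 ≤ ∑ ζ, ν ζ * F ζ ^ 2 := by
  have hcs := Finset.sum_mul_sq_le_sq_mul_sq Finset.univ
    (fun ζ => Real.sqrt (ν ζ)) (fun ζ => Real.sqrt (ν ζ) * F ζ)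
  have e1 : ∀ ζ : ι, Real.sqrt (ν ζ) * (Real.sqrt (ν ζ) * F ζ) = ν ζ * F ζ := by
    intro ζ
    rw [← mul_assoc, Real.mul_self_sqrt (hν ζ)]
  have e2 : ∀ ζ : ι, Real.sqrt (ν ζ) ^ 2 = ν ζ := fun ζ => Real.sq_sqrt (hν ζ)
  have e3 : ∀ ζ : ι, (Real.sqrt (ν ζ) * F ζ) ^ 2 = ν ζ * F ζ ^ 2 := by
    intro ζ
    rw [mul_pow, Real.sq_sqrt (hν ζ)]
  rw [Finset.sum_congr rfl fun ζ _ => e1 ζ, Finset.sum_congr rfl fun ζ _ => e2 ζ,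
    Finset.sum_congr rfl fun ζ _ => e3 ζ, hν1, one_mul] at hcs
  exact hcs

lemma nu_nonneg (hq0 : 0 < q) (hq1 : q < 1) {i : ℤ} (hi : i ∈ Finset.Icc (1:ℤ) (N:ℤ)) :
    ∀ ζ : S ℓ N, 0 ≤ blockW q ℓ N i ζ / Zb q ℓ N i := fun ζ =>
  div_nonneg (blockW_nonneg hq0 hq1 i ζ) (Zb_pos hq0 hq1 hi).le

lemma nu_sum_one (hq0 : 0 < q) (hq1 : q < 1) {i : ℤ} (hi : i ∈ Finset.Icc (1:ℤ) (N:ℤ)) :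
    ∑ ζ : S ℓ N, blockW q ℓ N i ζ / Zb q ℓ N i = 1 := by
  rw [← Finset.sum_div, ← Zb, div_self (Zb_pos hq0 hq1 hi).ne']

lemma condVar_nonneg (hq0 : 0 < q) (hq1 : q < 1) {i : ℤ}
    (hi : i ∈ Finset.Icc (1:ℤ) (N:ℤ)) (f : S ℓ N → ℝ) (η : S ℓ N) :
    0 ≤ condVar q ℓ N i f η := by
  rw [condVar, condE_eq, condE_eq, sub_nonneg]
  exact sq_avg_le _ (fun ζ => f (patch ℓ N i η ζ)) (nu_nonneg hq0 hq1 hi)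
    (nu_sum_one hq0 hq1 hi)

lemma indep_all_const {h : S ℓ N → ℝ}
    (hind : ∀ i : ℤ, i ∈ Finset.Icc (1:ℤ) (N:ℤ) → IndepOf ℓ N i h) :
    ∀ η η' : S ℓ N, h η = h η' := by
  have key : ∀ (n : ℕ) (η η' : S ℓ N),
      (Finset.univ.filter (fun y => η y ≠ η' y)).card ≤ n → h η = h η' := by
    intro n
    induction n with
    | zero =>
      intro η η' hc
      have heq : ∀ y, η y = η' y := by
        intro y
        by_contra hy
        have hmem : y ∈ Finset.univ.filter (fun y => η y ≠ η' y) := by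
          simp [hy]
        have := Finset.card_pos.2 ⟨y, hmem⟩
        omega
      rw [funext heq]
    | succ n ih =>
      intro η η' hc
      by_cases hall : ∀ y, η y = η' y
      · rw [funext hall]
      · push_neg at hall
        obtain ⟨y, hy⟩ := hall
        obtain ⟨i, hi, hyb⟩ := exists_block (ℓ := ℓ) (N := N) y.2
        have h1 : h (patch ℓ N i η η') = h η := hind i hi η η'
        have hsub : Finset.univ.filter (fun z => patch ℓ N i η η' z ≠ η' z) ⊆
            (Finset.univ.filter (fun z => η z ≠ η' z)).erase y := by
          intro z hz
          rw [Finset.mem_filter] at hz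
          rw [Finset.mem_erase, Finset.mem_filter]
          by_cases hzb : (z:ℤ) ∈ blockI ℓ i
          · exfalso
            apply hz.2
            rw [patch_apply, if_pos hzb]
          · have hpz : patch ℓ N i η η' z = η z := by rw [patch_apply, if_neg hzb]
            refine ⟨?_, Finset.mem_univ _, by rw [← hpz]; exact hz.2⟩
            intro hzy
            apply hzb
            rw [hzy]
            exact hyb
        have hycard : y ∈ Finset.univ.filter (fun z => η z ≠ η' z) := by simp [hy]
        have hcard : (Finset.univ.filter (fun z => patch ℓ N i η η' z ≠ η' z)).card ≤ n := by
          have h2 := Finset.card_le_card hsub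
          rw [Finset.card_erase_of_mem hycard] at h2
          omega
        rw [← h1]
        exact ih _ _ hcard
  intro η η'
  exact key _ η η' le_rfl

lemma EE_N_const (hq0 : 0 < q) (hq1 : q < 1) (g : S ℓ N → ℝ) (η : S ℓ N) :
    EE q ℓ N N g η = avg q ℓ N g := by
  have hind : ∀ i : ℤ, i ∈ Finset.Icc (1:ℤ) (N:ℤ) → IndepOf ℓ N i (EE q ℓ N N g) := by
    intro i hi
    rw [Finset.mem_Icc] at hi
    have h1 : 1 ≤ i.toNat := by omega
    have h2 : i.toNat ≤ N := by omega
    have := EE_indep (q := q) g N i.toNat h1 h2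
    rwa [show ((i.toNat : ℕ):ℤ) = i by omega] at this
  have hc := indep_all_const hind
  calc EE q ℓ N N g η = avg q ℓ N (fun _ => EE q ℓ N N g η) :=
        (avg_const hq0 hq1 _).symm
    _ = avg q ℓ N (EE q ℓ N N g) := by
        congr 1
        funext η'
        exact hc η η'
    _ = avg q ℓ N g := avg_EE hq0 hq1 le_rfl g

lemma entOp_le_condVar (hq0 : 0 < q) (hq1 : q < 1) {i : ℤ}
    (hi : i ∈ Finset.Icc (1:ℤ) (N:ℤ)) (f : S ℓ N → ℝ) (η : S ℓ N) :
    entOp q ℓ N i (fun ξ => f ξ ^ 2) η ≤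
      (18 + 8 * ((ℓ:ℝ)+1) * Real.log (min q (1-q))⁻¹) * condVar q ℓ N i f η := by
  have hm0 : 0 < min q (1-q) := lt_min hq0 (by linarith)
  have hm01 : min q (1-q) ≤ 1 := le_trans (min_le_left _ _) hq1.le
  have hZb := Zb_pos (ℓ := ℓ) hq0 hq1 hi
  have hinv1 : (1:ℝ) ≤ (min q (1-q))⁻¹ := by
    rw [← one_div]
    rw [le_div_iff₀ hm0]
    linarith
  set T : ℝ := ((min q (1-q))⁻¹) ^ (ℓ+1) with hT
  have hT1 : 1 ≤ T := one_le_pow₀ hinv1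
  have hlogT : Real.log T = ((ℓ:ℝ)+1) * Real.log (min q (1-q))⁻¹ := by
    rw [hT, Real.log_pow]
    push_cast
    ring
  set F : S ℓ N → ℝ := fun ζ => f (patch ℓ N i η ζ) with hF
  have hbd : ∀ ξ : S ℓ N, blockW q ℓ N i ξ / Zb q ℓ N i ≠ 0 →
      F ξ ^ 2 ≤ T * ∑ ζ : S ℓ N, blockW q ℓ N i ζ / Zb q ℓ N i * F ζ ^ 2 := by
    intro ξ hνξ
    have hW : blockW q ℓ N i ξ ≠ 0 := by
      intro hz
      exact hνξ (by rw [hz, zero_div])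
    have hwb := weight_bound hq0 hq1 hi η ξ hW f
    have hsum : ∑ ζ : S ℓ N, blockW q ℓ N i ζ / Zb q ℓ N i * F ζ ^ 2 =
        (∑ ζ : S ℓ N, blockW q ℓ N i ζ * f (patch ℓ N i η ζ) ^ 2) / Zb q ℓ N i := by
      rw [Finset.sum_div]
      exact Finset.sum_congr rfl fun ζ _ => by rw [hF]; ring
    rw [hsum, hT, inv_pow]
    have hpow : (0:ℝ) < (min q (1-q)) ^ (ℓ+1) := by positivity
    have hrw : ((min q (1-q)) ^ (ℓ+1))⁻¹ *
        ((∑ ζ : S ℓ N, blockW q ℓ N i ζ * f (patch ℓ N i η ζ) ^ 2) / Zb q ℓ N i) =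
        (∑ ζ : S ℓ N, blockW q ℓ N i ζ * f (patch ℓ N i η ζ) ^ 2) /
          ((min q (1-q)) ^ (ℓ+1) * Zb q ℓ N i) := by
      field_simp
    rw [hrw, le_div_iff₀ (by positivity)]
    calc F ξ ^ 2 * ((min q (1-q)) ^ (ℓ+1) * Zb q ℓ N i)
        = (min q (1-q)) ^ (ℓ+1) * Zb q ℓ N i * f (patch ℓ N i η ξ) ^ 2 := by
          rw [hF]; ring
      _ ≤ _ := hwb
  have hlsi := finite_lsi (fun ζ => blockW q ℓ N i ζ / Zb q ℓ N i) F T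
    (nu_nonneg hq0 hq1 hi) (nu_sum_one hq0 hq1 hi) hT1 hbd
  have e1 : condE q ℓ N i (fun ξ => (fun ξ' => f ξ' ^ 2) ξ * Real.log ((fun ξ' => f ξ' ^ 2) ξ)) η
      = ∑ ζ : S ℓ N, blockW q ℓ N i ζ / Zb q ℓ N i * (F ζ ^ 2 * Real.log (F ζ ^ 2)) := by
    rw [condE_eq]
  have e2 : condE q ℓ N i (fun ξ => f ξ ^ 2) η
      = ∑ ζ : S ℓ N, blockW q ℓ N i ζ / Zb q ℓ N i * F ζ ^ 2 := by
    rw [condE_eq]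
  have e3 : condE q ℓ N i f η
      = ∑ ζ : S ℓ N, blockW q ℓ N i ζ / Zb q ℓ N i * F ζ := by
    rw [condE_eq]
  rw [entOp, condVar, e1, e2, e3]
  rw [hlogT] at hlsi
  rw [show (18 + 8 * ((ℓ:ℝ)+1) * Real.log (min q (1-q))⁻¹)
    = 18 + 8 * (((ℓ:ℝ)+1) * Real.log (min q (1-q))⁻¹) from by ring]
  exact hlsi

end P8

/-- there is a constant `c_q`, depending only on `q ∈ (0,1)`, such that for
all `ℓ, N ≥ 1` and every `f`:
`Ent_{π̂}(f²) ≤ c_q ℓ ∑_{i=1}^N π̂(Var_{π̂_{Λ_i}}(f))`. -/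
theorem stmt15 (q : ℝ) (hq0 : 0 < q) (hq1 : q < 1) :
    ∃ c : ℝ, 0 < c ∧ ∀ ℓ N : ℕ, 1 ≤ ℓ → 1 ≤ N → ∀ f : S ℓ N → ℝ,
      entS q ℓ N (fun η => f η ^ 2) ≤
        c * (ℓ : ℝ) *
          ∑ i ∈ Finset.Icc (1 : ℤ) (N : ℤ), avg q ℓ N (condVar q ℓ N i f) := by
  have hm0 : 0 < min q (1-q) := lt_min hq0 (by linarith)
  set L : ℝ := Real.log (min q (1-q))⁻¹ with hL
  have hL0 : 0 ≤ L := Real.log_nonneg (by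
    rw [← one_div, le_div_iff₀ hm0]
    have := min_le_left q (1-q)
    linarith)
  refine ⟨18 + 16 * L, by linarith, ?_⟩
  intro ℓ N hℓ hN f
  set g : S ℓ N → ℝ := fun η => f η ^ 2 with hg
  have hgnn : ∀ η, 0 ≤ g η := fun η => sq_nonneg _
  set a : ℕ → ℝ := fun k => avg q ℓ N (fun η => g η * Real.log (EE q ℓ N k g η)) with ha
  have hent : entS q ℓ N g = a 0 - a N := by
    have hNc : a N = avg q ℓ N g * Real.log (avg q ℓ N g) := by
      rw [ha]
      simp only
      have e : (fun η => g η * Real.log (EE q ℓ N N g η)) =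
          fun η => Real.log (avg q ℓ N g) * g η := by
        funext η
        rw [EE_N_const hq0 hq1 g η]
        ring
      rw [e, avg_smul]
      ring
    rw [hNc]
    rfl
  have htel : a 0 - a N = ∑ k ∈ Finset.range N, (a k - a (k+1)) :=
    (Finset.sum_range_sub' a N).symm
  have hterm : ∀ k ∈ Finset.range N, a k - a (k+1) ≤
      (18 + 16*L) * (ℓ:ℝ) * avg q ℓ N (condVar q ℓ N ((k:ℤ)+1) f) := by
    intro k hk
    rw [Finset.mem_range] at hk
    have h1 : a k - a (k+1) = avg q ℓ N (entOp q ℓ N ((k:ℤ)+1) (EE q ℓ N k g)) :=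
      step_eq hq0 hq1 hk g
    have h2 := avg_entOp_le hq0 hq1 hk hgnn
    have h3 : avg q ℓ N (entOp q ℓ N ((k:ℤ)+1) g) ≤
        avg q ℓ N (fun η => (18 + 8*((ℓ:ℝ)+1)*L) * condVar q ℓ N ((k:ℤ)+1) f η) :=
      avg_mono hq0 hq1 (fun η => entOp_le_condVar hq0 hq1 (block_mem hk) f η)
    rw [avg_smul] at h3
    have h4 : 0 ≤ avg q ℓ N (condVar q ℓ N ((k:ℤ)+1) f) := by
      have h := avg_mono hq0 hq1 (g := fun _ => (0:ℝ))
        (fun η => condVar_nonneg hq0 hq1 (block_mem hk) f η)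
      rwa [avg_const hq0 hq1 0] at h
    have h5 : (18 + 8*((ℓ:ℝ)+1)*L) ≤ (18 + 16*L) * (ℓ:ℝ) := by
      have hl1 : (1:ℝ) ≤ (ℓ:ℝ) := by exact_mod_cast hℓ
      nlinarith
    rw [h1]
    exact h2.trans (h3.trans (mul_le_mul_of_nonneg_right h5 h4))
  have hre : ∑ i ∈ Finset.Icc (1:ℤ) (N:ℤ), avg q ℓ N (condVar q ℓ N i f)
      = ∑ k ∈ Finset.range N, avg q ℓ N (condVar q ℓ N ((k:ℤ)+1) f) := by
    refine Finset.sum_bij' (fun (a : ℤ) (_ : a ∈ Finset.Icc (1:ℤ) (N:ℤ)) => (a - 1).toNat)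
      (fun (k : ℕ) (_ : k ∈ Finset.range N) => (k:ℤ)+1) ?_ ?_ ?_ ?_ ?_
    · intro x hx
      rw [Finset.mem_Icc] at hx
      show (x-1).toNat ∈ Finset.range N
      rw [Finset.mem_range]
      omega
    · intro k hk
      rw [Finset.mem_range] at hk
      show (k:ℤ)+1 ∈ Finset.Icc (1:ℤ) (N:ℤ)
      rw [Finset.mem_Icc]
      omega
    · intro x hx
      rw [Finset.mem_Icc] at hx
      show (((x - 1).toNat : ℕ) : ℤ) + 1 = x
      omega
    · intro k hk
      show (((k:ℤ) + 1) - 1).toNat = k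
      omega
    · intro x hx
      rw [Finset.mem_Icc] at hx
      rw [show ((((x - 1).toNat : ℕ)):ℤ) + 1 = x by omega]
  calc entS q ℓ N g = ∑ k ∈ Finset.range N, (a k - a (k+1)) := by rw [hent, htel]
    _ ≤ ∑ k ∈ Finset.range N,
        (18 + 16*L) * (ℓ:ℝ) * avg q ℓ N (condVar q ℓ N ((k:ℤ)+1) f) :=
        Finset.sum_le_sum hterm
    _ = (18 + 16*L) * (ℓ:ℝ) *
        ∑ k ∈ Finset.range N, avg q ℓ N (condVar q ℓ N ((k:ℤ)+1) f) := by
        rw [Finset.mul_sum]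
    _ = (18 + 16*L) * (ℓ:ℝ) *
        ∑ i ∈ Finset.Icc (1:ℤ) (N:ℤ), avg q ℓ N (condVar q ℓ N i f) := by rw [hre]
end

section
/- Let p̂ ∈ (1/2, 1). There exist constants C, c > 0 depending only on p̂ such that for all integers 1 ≤ k ≤ n and every function f on {0,1}^{{1,…,n}} depending only on the coordinates {1,…,k}: | π̂_n^0(f) − π̂_n^1(f) | ≤ C·‖f‖_∞·e^{−c(n−k)}, where π̂_n^ε is the Bernoulli(p̂) product measure on {0,1}^{{1,…,n}} conditioned on the parity-ε class. -/
open scoped Classical BigOperators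

/-- The interval `I_n = {1, …, n}`. -/
noncomputable def In (n : ℕ) : Finset ℤ := Finset.Icc 1 (n : ℤ)

/-- Configurations on `I_n`. -/
abbrev T (n : ℕ) : Type := ↥(In n) → Bool

/-- The state of site `x` (sites outside `I_n` are irrelevant and set to `1`). -/
noncomputable def getT (n : ℕ) (η : T n) (x : ℤ) : Bool :=
  if h : x ∈ In n then η ⟨x, h⟩ else true

/-- The Bernoulli(`p̂`) weight of a configuration. -/
noncomputable def wT (phat : ℝ) (n : ℕ) (η : T n) : ℝ :=
  ∏ y : ↥(In n), if η y then phat else 1 - phat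

/-- The number of infected (zero) sites of `η`. -/
noncomputable def nZeros (n : ℕ) (η : T n) : ℕ :=
  (Finset.univ.filter fun y : ↥(In n) => η y = false).card

/-- The parity class `Ω_n^ε` (`ε ∈ {0,1}`): configurations whose number of zeros is `≡ ε`. -/
noncomputable def ParSet (n : ℕ) (ε : ℕ) : Finset (T n) :=
  Finset.univ.filter fun η => nZeros n η % 2 = ε

/-- The mean of `f` under the Bernoulli(`p̂`) product measure conditioned on the
(sub)set `A` of configurations. -/
noncomputable def cavg (phat : ℝ) (n : ℕ) (A : Finset (T n)) (f : T n → ℝ) : ℝ :=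
  (∑ η ∈ A, wT phat n η * f η) / (∑ η ∈ A, wT phat n η)

lemma sum_prod_bool {ι : Type*} [Fintype ι] [DecidableEq ι] (g : ι → Bool → ℝ) :
    ∑ η : ι → Bool, ∏ y, g y (η y) = ∏ y, (g y true + g y false) := by
  rw [← Fintype.prod_sum fun y b => g y b]
  exact Finset.prod_congr rfl fun y _ => by simp

lemma abs_sum_prod_le {ι : Type*} [Fintype ι] [DecidableEq ι] (hb wb : Bool → ℝ)
    (habs : ∀ b, |hb b| = wb b) (g : (ι → Bool) → ℝ) (M : ℝ) (hg : ∀ a, |g a| ≤ M) :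
    |∑ a : ι → Bool, (∏ y, hb (a y)) * g a|
      ≤ (wb true + wb false) ^ Fintype.card ι * M := by
  have hwb : ∀ b, 0 ≤ wb b := fun b => (habs b) ▸ abs_nonneg _
  calc |∑ a : ι → Bool, (∏ y, hb (a y)) * g a|
      ≤ ∑ a : ι → Bool, |(∏ y, hb (a y)) * g a| := Finset.abs_sum_le_sum_abs _ _
    _ ≤ ∑ a : ι → Bool, (∏ y, wb (a y)) * M := by
        refine Finset.sum_le_sum fun a _ => ?_
        rw [abs_mul, Finset.abs_prod]
        have h1 : (∏ y, |hb (a y)|) = ∏ y, wb (a y) :=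
          Finset.prod_congr rfl fun y _ => habs _
        rw [h1]
        exact mul_le_mul_of_nonneg_left (hg a) (Finset.prod_nonneg fun y _ => hwb _)
    _ = (wb true + wb false) ^ Fintype.card ι * M := by
        rw [← Finset.sum_mul, sum_prod_bool fun _ b => wb b, Finset.prod_const,
          Finset.card_univ]

lemma sum_prod_mul_factor {ι : Type*} [Fintype ι] [DecidableEq ι] (P : ι → Prop)
    [DecidablePred P] (hb : Bool → ℝ) (f : (ι → Bool) → ℝ)
    (hf : ∀ η η' : ι → Bool, (∀ y, P y → η y = η' y) → f η = f η') :
    ∑ η : ι → Bool, (∏ y, hb (η y)) * f η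
      = (∑ a : {y // P y} → Bool, (∏ y, hb (a y)) *
          f ((Equiv.piEquivPiSubtypeProd P fun _ => Bool).symm (a, fun _ => true)))
        * ((hb true + hb false) ^ Fintype.card {y // ¬ P y}) := by
  classical
  set e := (Equiv.piEquivPiSubtypeProd P fun _ => Bool) with he
  rw [← Equiv.sum_comp e.symm (fun η => (∏ y, hb (η y)) * f η)]
  rw [Fintype.sum_prod_type]
  have key : ∀ (a : {y // P y} → Bool) (b : {y // ¬ P y} → Bool),
      (∏ y, hb (e.symm (a, b) y)) * f (e.symm (a, b))
      = ((∏ y : {y // P y}, hb (a y)) * f (e.symm (a, fun _ => true)))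
          * (∏ y : {y // ¬ P y}, hb (b y)) := by
    intro a b
    have h1 : (∏ y, hb (e.symm (a, b) y))
        = (∏ y : {y // P y}, hb (a y)) * ∏ y : {y // ¬ P y}, hb (b y) := by
      rw [← Fintype.prod_subtype_mul_prod_subtype P (fun y => hb (e.symm (a, b) y))]
      congr 1
      · exact Finset.prod_congr rfl fun y _ => by
          simp [he, Equiv.piEquivPiSubtypeProd_symm_apply, y.2]
      · exact Finset.prod_congr rfl fun y _ => by
          simp [he, Equiv.piEquivPiSubtypeProd_symm_apply, y.2]
    have h2 : f (e.symm (a, b)) = f (e.symm (a, fun _ => true)) := by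
      apply hf
      intro y hy
      simp [he, Equiv.piEquivPiSubtypeProd_symm_apply, hy]
    rw [h1, h2]; ring
  simp_rw [key]
  rw [← Finset.sum_mul_sum]
  congr 1
  rw [sum_prod_bool fun _ b => hb b, Finset.prod_const, Finset.card_univ]

lemma card_In (n : ℕ) : Fintype.card ↥(In n) = n := by
  rw [Fintype.card_coe, In, Int.card_Icc]
  omega

lemma card_not_le (n k : ℕ) (hk1 : 1 ≤ k) (hkn : k ≤ n) :
    Fintype.card {y : ↥(In n) // ¬ ((y : ℤ) ≤ (k : ℤ))} = n - k := by
  have e : {y : ↥(In n) // ¬ ((y : ℤ) ≤ (k : ℤ))} ≃ ↥(Finset.Ioc (k : ℤ) (n : ℤ)) :=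
    { toFun := fun y => ⟨y.1.1, by
        have h := y.1.2
        have h' := y.2
        simp only [In, Finset.mem_Icc] at h
        simp only [Finset.mem_Ioc]
        omega⟩
      invFun := fun x => ⟨⟨x.1, by
        have h := x.2
        simp only [Finset.mem_Ioc] at h
        simp only [In, Finset.mem_Icc]
        omega⟩, by
        show ¬ ((x.1 : ℤ) ≤ (k : ℤ))
        have h := x.2
        simp only [Finset.mem_Ioc] at h
        omega⟩
      left_inv := fun y => by apply Subtype.ext; apply Subtype.ext; rfl
      right_inv := fun x => by apply Subtype.ext; rfl }
  rw [Fintype.card_congr e, Fintype.card_coe, Int.card_Ioc]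
  omega

set_option maxHeartbeats 1600000 in
/-- let `p̂ ∈ (1/2, 1)`. There are constants `C, c > 0` depending only on
`p̂` such that for all `1 ≤ k ≤ n` and every `f` on `{0,1}^{1,…,n}` depending only on the
coordinates `{1,…,k}`: `|π̂_n^0(f) - π̂_n^1(f)| ≤ C ‖f‖_∞ e^{-c(n-k)}`, where `π̂_n^ε` is
the Bernoulli(`p̂`) product measure conditioned on the parity-`ε` class. -/
theorem stmt17 (phat : ℝ) (h2 : 1 / 2 < phat) (h1 : phat < 1) :
    ∃ C : ℝ, 0 < C ∧ ∃ c : ℝ, 0 < c ∧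
      ∀ n k : ℕ, 1 ≤ k → k ≤ n → ∀ f : T n → ℝ,
        (∀ η η' : T n, (∀ y : ↥(In n), (y : ℤ) ≤ (k : ℤ) → η y = η' y) → f η = f η') →
        ∀ M : ℝ, (∀ η : T n, |f η| ≤ M) →
          |cavg phat n (ParSet n 0) f - cavg phat n (ParSet n 1) f|
            ≤ C * M * Real.exp (-c * ((n : ℝ) - (k : ℝ))) := by
  set q : ℝ := 1 - phat with hqdef
  set δ : ℝ := phat - q with hδdef
  have hq0 : 0 < q := by simp [hqdef]; linarith
  have hqh : q < 1 / 2 := by simp [hqdef]; linarith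
  have hδ0 : 0 < δ := by simp [hδdef, hqdef]; linarith
  have hδ1 : δ < 1 := by simp [hδdef, hqdef]; linarith
  have hδsq : δ ^ 2 < 1 := by nlinarith
  refine ⟨4 / (1 - δ ^ 2), div_pos (by norm_num) (by nlinarith), -Real.log δ, by
    have := Real.log_neg hδ0 hδ1; linarith, ?_⟩
  intro n k hk1 hkn f hf M hM
  have hn1 : 1 ≤ n := le_trans hk1 hkn
  have hM0 : 0 ≤ M := le_trans (abs_nonneg _) (hM fun _ => true)
  -- basic weights
  set hb : Bool → ℝ := fun b => if b then phat else -q with hhb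
  set wb : Bool → ℝ := fun b => if b then phat else q with hwb
  have hwT : ∀ η : T n, wT phat n η = ∏ y, wb (η y) := by
    intro η
    exact Finset.prod_congr rfl fun y _ => by cases hy : η y <;> simp [hy, hwb, hqdef]
  have hwT0 : ∀ η : T n, 0 ≤ wT phat n η := by
    intro η
    rw [hwT]
    exact Finset.prod_nonneg fun y _ => by cases hy : η y <;> simp [hy, hwb] <;> linarith
  -- the sign function
  set sg : T n → ℝ := fun η => ∏ y, (if η y then (1 : ℝ) else -1) with hsg
  have hsg_val : ∀ η : T n, sg η = (-1 : ℝ) ^ nZeros n η := by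
    intro η
    rw [hsg, nZeros, ← Finset.prod_const, Finset.prod_filter]
    exact Finset.prod_congr rfl fun y _ => by cases hy : η y <;> simp [hy]
  have hsg0 : ∀ η ∈ ParSet n 0, sg η = 1 := by
    intro η hη
    rw [ParSet, Finset.mem_filter] at hη
    rw [hsg_val]
    exact Even.neg_one_pow (Nat.even_iff.2 hη.2)
  have hsg1 : ∀ η ∈ ParSet n 1, sg η = -1 := by
    intro η hη
    rw [ParSet, Finset.mem_filter] at hη
    rw [hsg_val]
    exact Odd.neg_one_pow (Nat.odd_iff.2 hη.2)
  -- splitting sums according to parity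
  have hPar1 : ParSet n 1 = Finset.univ.filter (fun η => ¬ (nZeros n η % 2 = 0)) := by
    unfold ParSet
    apply Finset.filter_congr
    intro η _
    constructor
    · intro h; omega
    · intro h; omega
  have hsplit : ∀ F : T n → ℝ,
      (∑ η ∈ ParSet n 0, F η) + (∑ η ∈ ParSet n 1, F η) = ∑ η : T n, F η := by
    intro F
    rw [show ParSet n 0 = Finset.univ.filter (fun η => nZeros n η % 2 = 0) from rfl, hPar1]
    exact Finset.sum_filter_add_sum_filter_not _ _ _
  have hsigned : ∀ F : T n → ℝ,
      (∑ η ∈ ParSet n 0, F η) - (∑ η ∈ ParSet n 1, F η) = ∑ η : T n, F η * sg η := by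
    intro F
    rw [← hsplit (fun η => F η * sg η)]
    have e0 : ∑ η ∈ ParSet n 0, F η * sg η = ∑ η ∈ ParSet n 0, F η :=
      Finset.sum_congr rfl fun η hη => by rw [hsg0 η hη, mul_one]
    have e1 : ∑ η ∈ ParSet n 1, F η * sg η = -∑ η ∈ ParSet n 1, F η := by
      rw [← Finset.sum_neg_distrib]
      exact Finset.sum_congr rfl fun η hη => by rw [hsg1 η hη]; ring
    rw [e0, e1]; ring
  -- total mass and signed mass
  have hW : ∑ η : T n, wT phat n η = 1 := by
    have : ∑ η : T n, wT phat n η = ∑ η : T n, ∏ y, wb (η y) :=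
      Finset.sum_congr rfl fun η _ => hwT η
    rw [this, sum_prod_bool fun _ b => wb b]
    have : wb true + wb false = 1 := by simp [hwb, hqdef]
    rw [this, Finset.prod_const, one_pow]
  have hD : ∑ η : T n, wT phat n η * sg η = δ ^ n := by
    have h0 : ∀ η : T n, wT phat n η * sg η = ∏ y, hb (η y) := by
      intro η
      rw [hwT, hsg, ← Finset.prod_mul_distrib]
      exact Finset.prod_congr rfl fun y _ => by cases hy : η y <;> simp [hy, hwb, hhb]
    rw [Finset.sum_congr rfl fun η _ => h0 η, sum_prod_bool fun _ b => hb b]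
    have : hb true + hb false = δ := by simp [hhb, hδdef]; ring
    rw [this, Finset.prod_const, Finset.card_univ, card_In]
  -- named sums
  set S0 := ∑ η ∈ ParSet n 0, wT phat n η with hS0def
  set S1 := ∑ η ∈ ParSet n 1, wT phat n η with hS1def
  set N0 := ∑ η ∈ ParSet n 0, wT phat n η * f η with hN0def
  set N1 := ∑ η ∈ ParSet n 1, wT phat n η * f η with hN1def
  set A := ∑ η : T n, wT phat n η * f η with hAdef
  set B := ∑ η : T n, (wT phat n η * f η) * sg η with hBdef
  have eS : S0 + S1 = 1 := by rw [hS0def, hS1def, hsplit]; exact hW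
  have eS' : S0 - S1 = δ ^ n := by rw [hS0def, hS1def, hsigned]; exact hD
  have eN : N0 + N1 = A := by rw [hN0def, hN1def, hAdef, hsplit]
  have eN' : N0 - N1 = B := by rw [hN0def, hN1def, hBdef, hsigned]
  -- bounds on A and B
  have hA : |A| ≤ M := by
    calc |A| ≤ ∑ η : T n, |wT phat n η * f η| := Finset.abs_sum_le_sum_abs _ _
      _ ≤ ∑ η : T n, wT phat n η * M := by
          refine Finset.sum_le_sum fun η _ => ?_
          rw [abs_mul, abs_of_nonneg (hwT0 η)]
          exact mul_le_mul_of_nonneg_left (hM η) (hwT0 η)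
      _ = M := by rw [← Finset.sum_mul, hW, one_mul]
  have hδnk0 : (0:ℝ) ≤ δ ^ (n - k) := by positivity
  have hB : |B| ≤ M * δ ^ (n - k) := by
    have h0 : ∀ η : T n, (wT phat n η * f η) * sg η = (∏ y, hb (η y)) * f η := by
      intro η
      have : wT phat n η * sg η = ∏ y, hb (η y) := by
        rw [hwT, hsg, ← Finset.prod_mul_distrib]
        exact Finset.prod_congr rfl fun y _ => by cases hy : η y <;> simp [hy, hwb, hhb]
      rw [← this]; ring
    have hBeq : B = ∑ η : T n, (∏ y, hb (η y)) * f η :=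
      Finset.sum_congr rfl fun η _ => h0 η
    rw [hBeq, sum_prod_mul_factor (fun y : ↥(In n) => (y : ℤ) ≤ (k : ℤ)) hb f hf]
    rw [abs_mul]
    have hcard := card_not_le n k hk1 hkn
    have habs : ∀ b, |hb b| = wb b := by
      intro b
      cases b <;> simp [hhb, hwb, abs_of_nonneg, abs_of_pos hq0, le_of_lt hq0]
      · linarith
    have h2' : |(hb true + hb false) ^ Fintype.card {y : ↥(In n) // ¬ ((y:ℤ) ≤ (k:ℤ))}|
        = δ ^ (n - k) := by
      have : hb true + hb false = δ := by simp [hhb, hδdef]; ring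
      rw [this, hcard, abs_of_nonneg hδnk0]
    rw [h2']
    have h1' := abs_sum_prod_le hb wb habs
      (fun a => f ((Equiv.piEquivPiSubtypeProd
        (fun y : ↥(In n) => (y : ℤ) ≤ (k : ℤ)) fun _ => Bool).symm (a, fun _ => true)))
      M (fun a => hM _)
    have hwb1 : wb true + wb false = 1 := by simp [hwb, hqdef]
    rw [hwb1, one_pow, one_mul] at h1'
    exact mul_le_mul_of_nonneg_right h1' hδnk0
  -- positivity of the partition weights
  have hδn0 : (0:ℝ) < δ ^ n := by positivity
  have hδn1 : δ ^ n < 1 := pow_lt_one₀ (le_of_lt hδ0) hδ1 (by omega)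
  have hS0v : S0 = (1 + δ ^ n) / 2 := by linarith
  have hS1v : S1 = (1 - δ ^ n) / 2 := by linarith
  have hN0v : N0 = (A + B) / 2 := by linarith
  have hN1v : N1 = (A - B) / 2 := by linarith
  -- the exact formula for the difference
  have hkey : cavg phat n (ParSet n 0) f - cavg phat n (ParSet n 1) f
      = (2 * B - 2 * A * δ ^ n) / (1 - (δ ^ n) ^ 2) := by
    rw [cavg, cavg, ← hS0def, ← hS1def, ← hN0def, ← hN1def, hS0v, hS1v, hN0v, hN1v]
    have h3 : (1:ℝ) + δ ^ n ≠ 0 := by positivity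
    have h4 : (1:ℝ) - δ ^ n ≠ 0 := by linarith
    have h5 : (1:ℝ) - (δ ^ n) ^ 2 ≠ 0 := by nlinarith
    field_simp
    ring
  rw [hkey, abs_div]
  have hden : |1 - (δ ^ n) ^ 2| = 1 - (δ ^ n) ^ 2 := abs_of_pos (by nlinarith)
  rw [hden]
  -- denominator lower bound
  have hδn_le : δ ^ n ≤ δ := by
    calc δ ^ n ≤ δ ^ 1 := pow_le_pow_of_le_one (le_of_lt hδ0) (le_of_lt hδ1) hn1
      _ = δ := pow_one δ
  have hdenlb : 1 - δ ^ 2 ≤ 1 - (δ ^ n) ^ 2 := by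
    have hsq : (δ ^ n) ^ 2 ≤ δ ^ 2 := pow_le_pow_left₀ (le_of_lt hδn0) hδn_le 2
    linarith
  -- numerator upper bound
  have hδn_le' : δ ^ n ≤ δ ^ (n - k) :=
    pow_le_pow_of_le_one (le_of_lt hδ0) (le_of_lt hδ1) (by omega)
  have hnum : |2 * B - 2 * A * δ ^ n| ≤ 4 * M * δ ^ (n - k) := by
    calc |2 * B - 2 * A * δ ^ n| ≤ |2 * B| + |2 * A * δ ^ n| := abs_sub _ _
      _ = 2 * |B| + 2 * |A| * δ ^ n := by
          rw [abs_mul, abs_mul, abs_mul, abs_of_nonneg (le_of_lt hδn0)]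
          norm_num
      _ ≤ 2 * (M * δ ^ (n - k)) + 2 * (M * δ ^ (n - k)) := by
          have t1 : 2 * |B| ≤ 2 * (M * δ ^ (n - k)) := by linarith
          have t2 : 2 * |A| * δ ^ n ≤ 2 * (M * δ ^ (n - k)) := by
            have : |A| * δ ^ n ≤ M * δ ^ (n - k) := by
              calc |A| * δ ^ n ≤ M * δ ^ n :=
                    mul_le_mul_of_nonneg_right hA (le_of_lt hδn0)
                _ ≤ M * δ ^ (n - k) := mul_le_mul_of_nonneg_left hδn_le' hM0
            linarith
          linarith
      _ = 4 * M * δ ^ (n - k) := by ring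
  -- conclude
  have hexp : Real.exp (-(-Real.log δ) * ((n : ℝ) - (k : ℝ))) = δ ^ (n - k) := by
    rw [neg_neg]
    have hc : (n : ℝ) - (k : ℝ) = ((n - k : ℕ) : ℝ) := by
      rw [Nat.cast_sub hkn]
    rw [hc, mul_comm, Real.exp_nat_mul, Real.exp_log hδ0]
  rw [hexp]
  have hfinal : |2 * B - 2 * A * δ ^ n| / (1 - (δ ^ n) ^ 2)
      ≤ (4 * M * δ ^ (n - k)) / (1 - δ ^ 2) :=
    div_le_div₀ (by positivity) hnum (by nlinarith) hdenlb
  calc |2 * B - 2 * A * δ ^ n| / (1 - (δ ^ n) ^ 2)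
      ≤ (4 * M * δ ^ (n - k)) / (1 - δ ^ 2) := hfinal
    _ = 4 / (1 - δ ^ 2) * M * δ ^ (n - k) := by ring
end
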